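/- arXiv:1411.0155 — 2 statements merged into one kernel-verified Lean document; each statement's English description precedes it below -/
import Mathlib

section
/- Suppose F(·,x,a) has bounded variation along x̄ uniformly over A with cumulative variation function η, let δ̄>0 satisfy η^δ̄(T) < ∞, assume (C1) and (C2), and let F̃ be the multifunction obtained from F by replacing its values at the endpoints by the one-sided limits F(S⁺,x,a) (for |x−x̄(S)| < δ̄) and F(T⁻,x,a) (for |x−x̄(T)| < δ̄). Then for every δ ∈ (0,δ̄) and every t ∈ (S,T): η̃^δ(t) = η^δ(t) − sup{ d_H(F(S,x,a), F(S⁺,x,a)) : x ∈ x̄(S)+δ𝔹, a ∈ A }. In particular, η̃^δ(t) − η̃^δ(s) = η^δ(t) − η^δ(s) for every [s,t] ⊂ (S,T). The same relation holds with δ = 0, interpreting η^0 = η and η̃^0 = η̃. -/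
open Set Metric Filter MeasureTheory Pointwise
open scoped ENNReal Topology

noncomputable section

/-- Euclidean `n`-space `ℝⁿ`. -/
abbrev En (n : ℕ) : Type := EuclideanSpace ℝ (Fin n)

/-- A partition `{t₀ = S, t₁, …, t_N = t}` of the interval `[S, t]`. -/
structure MvPartition (S t : ℝ) where
  N : ℕ
  pts : ℕ → ℝ
  hN : 0 < N
  first : pts 0 = S
  last : pts N = t
  mono : ∀ i, i < N → pts i < pts (i + 1)

/-- `diam(𝒯) ≤ ε` : every subinterval of the partition has length at most `ε`. -/
def MvPartition.diamLE {S t : ℝ} (P : MvPartition S t) (ε : ℝ) : Prop :=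
  ∀ i, i < P.N → P.pts (i + 1) - P.pts i ≤ ε

/-- The sum `I^δ(𝒯) = Σᵢ sup { d_H(F(tᵢ₊₁,x,a), F(tᵢ,x,a)) :
x ∈ x̄([tᵢ,tᵢ₊₁]) + δ𝔹, a ∈ A }` for a multifunction `F` along `x̄`, uniformly over `A`. -/
noncomputable def mvSum {n k : ℕ} (F : ℝ → En n → En k → Set (En n))
    (xbar : ℝ → En n) (A : Set (En k)) (δ : ℝ) {S t : ℝ} (P : MvPartition S t) : ℝ≥0∞ :=
  ∑ i ∈ Finset.range P.N,
    ⨆ x ∈ xbar '' Set.Icc (P.pts i) (P.pts (i + 1)) + Metric.closedBall (0 : En n) δ,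
      ⨆ a ∈ A, EMetric.hausdorffEdist (F (P.pts (i + 1)) x a) (F (P.pts i) x a)

/-- The `(δ,ε)`-perturbed cumulative variation function `η^δ_ε(t)`:
the supremum of `I^δ(𝒯)` over partitions `𝒯` of `[S,t]` with `diam(𝒯) ≤ ε`.
(For `t = S` there are no partitions and the value is `0`.) -/
noncomputable def mvEtaEps {n k : ℕ} (F : ℝ → En n → En k → Set (En n))
    (xbar : ℝ → En n) (A : Set (En k)) (δ ε : ℝ) (S t : ℝ) : ℝ≥0∞ :=
  ⨆ (P : MvPartition S t) (_ : P.diamLE ε), mvSum F xbar A δ P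

/-- The `δ`-perturbed cumulative variation function `η^δ(t) = lim_{ε↓0} η^δ_ε(t)`
(the limit of the decreasing-in-`ε` family equals the infimum). -/
noncomputable def mvEtaDelta {n k : ℕ} (F : ℝ → En n → En k → Set (En n))
    (xbar : ℝ → En n) (A : Set (En k)) (δ : ℝ) (S t : ℝ) : ℝ≥0∞ :=
  ⨅ (ε : ℝ) (_ : 0 < ε), mvEtaEps F xbar A δ ε S t

/-- The cumulative variation function `η(t) = lim_{δ↓0} η^δ(t)`. -/
noncomputable def mvEta {n k : ℕ} (F : ℝ → En n → En k → Set (En n))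
    (xbar : ℝ → En n) (A : Set (En k)) (S t : ℝ) : ℝ≥0∞ :=
  ⨅ (δ : ℝ) (_ : 0 < δ), mvEtaDelta F xbar A δ S t

/-- `F(·,x,a)` has bounded variation along `x̄` uniformly over `A` : `η(T) < ∞`. -/
def HasBVAlongUniformly {n k : ℕ} (F : ℝ → En n → En k → Set (En n))
    (xbar : ℝ → En n) (A : Set (En k)) (S T : ℝ) : Prop :=
  mvEta F xbar A S T < ⊤

/-- Hypothesis (C1): nonempty closed values, measurability in `t` (Castaing-type
characterization via distance functions), and uniform boundedness near `x̄`. -/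
def HypC1 {n k : ℕ} (F : ℝ → En n → En k → Set (En n))
    (xbar : ℝ → En n) (A : Set (En k)) (S T δbar : ℝ) : Prop :=
  (∀ t ∈ Set.Icc S T, ∀ x : En n, ∀ a ∈ A, (F t x a).Nonempty ∧ IsClosed (F t x a)) ∧
  (∀ x : En n, ∀ a ∈ A, ∀ v : En n,
      Measurable fun t : ℝ => EMetric.infEdist v (F t x a)) ∧
  (∃ c : ℝ, 0 < c ∧ ∀ t ∈ Set.Icc S T, ∀ x ∈ Metric.closedBall (xbar t) δbar, ∀ a ∈ A,
      F t x a ⊆ Metric.closedBall (0 : En n) c)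

/-- Hypothesis (C2): uniform continuity of `(x,a) ↦ F(t,x,a)` near `x̄`,
with a modulus of continuity `γ`. -/
def HypC2 {n k : ℕ} (F : ℝ → En n → En k → Set (En n))
    (xbar : ℝ → En n) (A : Set (En k)) (S T δbar : ℝ) : Prop :=
  ∃ γ : ℝ → ℝ, (∀ s, 0 ≤ γ s) ∧ Tendsto γ (𝓝[>] (0 : ℝ)) (𝓝 0) ∧
    ∀ t ∈ Set.Icc S T, ∀ x ∈ Metric.closedBall (xbar t) δbar,
      ∀ x' ∈ Metric.closedBall (xbar t) δbar, ∀ a ∈ A, ∀ a' ∈ A,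
        F t x a ⊆ F t x' a' + Metric.closedBall (0 : En n) (γ (‖x - x'‖ + ‖a - a'‖))

/-- The Kuratowski upper limit of a family of sets along a filter `l`. -/
def kLimsup {α : Type*} [PseudoEMetricSpace α] (l : Filter ℝ) (G : ℝ → Set α) : Set α :=
  {v | ∀ ε : ℝ≥0∞, 0 < ε → ∃ᶠ s in l, EMetric.infEdist v (G s) < ε}

/-- The Kuratowski lower limit of a family of sets along a filter `l`. -/
def kLiminf {α : Type*} [PseudoEMetricSpace α] (l : Filter ℝ) (G : ℝ → Set α) : Set α :=
  {v | Tendsto (fun s => EMetric.infEdist v (G s)) l (𝓝 0)}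

/-- The set-valued limit along `l` exists: upper and lower Kuratowski limits coincide. -/
def KLimExists {α : Type*} [PseudoEMetricSpace α] (l : Filter ℝ) (G : ℝ → Set α) : Prop :=
  kLimsup l G = kLiminf l G

/-- The set-valued right limit `F(s̄⁺, x, a) = lim_{s ↓ s̄} F(s,x,a)` (with `s ∈ (s̄,T]`). -/
def rightLim {n k : ℕ} (F : ℝ → En n → En k → Set (En n)) (T sbar : ℝ)
    (x : En n) (a : En k) : Set (En n) :=
  kLiminf (𝓝[Set.Ioc sbar T] sbar) fun s => F s x a

/-- The set-valued left limit `F(t̄⁻, x, a) = lim_{t ↑ t̄} F(t,x,a)` (with `t ∈ [S,t̄)`). -/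
def leftLim {n k : ℕ} (F : ℝ → En n → En k → Set (En n)) (S tbar : ℝ)
    (x : En n) (a : En k) : Set (En n) :=
  kLiminf (𝓝[Set.Ico S tbar] tbar) fun s => F s x a


open scoped Classical in
/-- The multifunction `F̃` obtained from `F` by replacing the endpoint values by the
one-sided limits: `F̃(S,x,a) = F(S⁺,x,a)` for `|x−x̄(S)| < δ̄`,
`F̃(T,x,a) = F(T⁻,x,a)` for `|x−x̄(T)| < δ̄`, and `F̃ = F` otherwise. -/
noncomputable def Ftilde {n k : ℕ} (F : ℝ → En n → En k → Set (En n))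
    (xbar : ℝ → En n) (S T δbar : ℝ) : ℝ → En n → En k → Set (En n) :=
  fun t x a =>
    if t = S ∧ ‖x - xbar S‖ < δbar then rightLim F T S x a
    else if t = T ∧ ‖x - xbar T‖ < δbar then leftLim F S T x a
    else F t x a

open scoped Classical in
/-- `η^δ(t)` for `δ > 0`, with the interpretation `η^0 = η` for `δ = 0`. -/
noncomputable def mvEtaD {n k : ℕ} (F : ℝ → En n → En k → Set (En n))
    (xbar : ℝ → En n) (A : Set (En k)) (δ : ℝ) (S t : ℝ) : ℝ≥0∞ :=
  if δ = 0 then mvEta F xbar A S t else mvEtaDelta F xbar A δ S t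

section Aux

variable {n k : ℕ} (F : ℝ → En n → En k → Set (En n)) (xbar : ℝ → En n) (A : Set (En k))

/-- One term of `mvSum` over an interval `[s,s']`. -/
noncomputable def Eterm (δ s s' : ℝ) : ℝ≥0∞ :=
  ⨆ x ∈ xbar '' Set.Icc s s' + Metric.closedBall (0 : En n) δ,
    ⨆ a ∈ A, EMetric.hausdorffEdist (F s' x a) (F s x a)

lemma mvSum_eq (δ : ℝ) {S t : ℝ} (P : MvPartition S t) :
    mvSum F xbar A δ P
      = ∑ i ∈ Finset.range P.N, Eterm F xbar A δ (P.pts i) (P.pts (i + 1)) := rfl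

lemma mem_dom_iff {δ s s' : ℝ} {x : En n} :
    x ∈ xbar '' Set.Icc s s' + Metric.closedBall (0 : En n) δ
      ↔ ∃ u ∈ Set.Icc s s', ‖x - xbar u‖ ≤ δ := by
  constructor
  · rintro ⟨y, ⟨u, hu, rfl⟩, z, hz, rfl⟩
    exact ⟨u, hu, by simpa [norm_sub_rev] using (mem_closedBall_iff_norm.1 hz)⟩
  · rintro ⟨u, hu, hxu⟩
    exact ⟨xbar u, ⟨u, hu, rfl⟩, x - xbar u, by simpa [mem_closedBall_iff_norm] using hxu,
      by show xbar u + (x - xbar u) = x; rw [add_comm, sub_add_cancel]⟩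

lemma le_Eterm {δ s s' : ℝ} {x : En n} {a : En k}
    (hx : x ∈ xbar '' Set.Icc s s' + Metric.closedBall (0 : En n) δ) (ha : a ∈ A) :
    EMetric.hausdorffEdist (F s' x a) (F s x a) ≤ Eterm F xbar A δ s s' := by
  refine le_trans ?_ (le_iSup₂ (f := fun x _ => ⨆ a ∈ A,
    EMetric.hausdorffEdist (F s' x a) (F s x a)) x hx)
  exact le_iSup₂ (f := fun a _ => EMetric.hausdorffEdist (F s' x a) (F s x a)) a ha

lemma Eterm_le {δ s s' : ℝ} {C : ℝ≥0∞}
    (h : ∀ x ∈ xbar '' Set.Icc s s' + Metric.closedBall (0 : En n) δ, ∀ a ∈ A,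
      EMetric.hausdorffEdist (F s' x a) (F s x a) ≤ C) :
    Eterm F xbar A δ s s' ≤ C :=
  iSup₂_le fun x hx => iSup₂_le fun a ha => h x hx a ha

namespace MvPartition

variable {S t : ℝ}

lemma pts_le (P : MvPartition S t) {i j : ℕ} (hij : i ≤ j) (hj : j ≤ P.N) :
    P.pts i ≤ P.pts j := by
  induction j with
  | zero => simp_all
  | succ m ih =>
    rcases Nat.lt_or_ge i (m+1) with h | h
    · exact le_trans (ih (Nat.lt_succ_iff.1 h) (le_trans (Nat.le_succ m) hj))
        (le_of_lt (P.mono m (Nat.lt_of_succ_le hj)))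
    · have : i = m + 1 := le_antisymm hij h
      simp [this]

lemma S_le_pts (P : MvPartition S t) {i : ℕ} (hi : i ≤ P.N) : S ≤ P.pts i := by
  simpa [P.first] using P.pts_le (Nat.zero_le i) hi

lemma pts_le_t (P : MvPartition S t) {i : ℕ} (hi : i ≤ P.N) : P.pts i ≤ t := by
  simpa [P.last] using P.pts_le hi le_rfl

lemma S_lt_t (P : MvPartition S t) : S < t := by
  have h0 := P.mono 0 P.hN
  have := P.pts_le P.hN le_rfl
  rw [P.first] at h0; rw [P.last] at this
  exact lt_of_lt_of_le h0 this

lemma S_lt_pts1 (P : MvPartition S t) : S < P.pts 1 := by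
  have := P.mono 0 P.hN; rwa [P.first] at this

/-- The trivial partition `{s, s'}`. -/
noncomputable def single (s s' : ℝ) (h : s < s') : MvPartition s s' where
  N := 1
  pts := fun i => if i = 0 then s else s'
  hN := one_pos
  first := rfl
  last := rfl
  mono := fun i hi => by
    have : i = 0 := by omega
    subst this; simpa using h

lemma mvSum_single (δ : ℝ) {s s' : ℝ} (h : s < s') :
    mvSum F xbar A δ (single s s' h) = Eterm F xbar A δ s s' := by
  simp [mvSum_eq, single]

lemma diamLE_single {s s' ε : ℝ} (h : s < s') (hε : s' - s ≤ ε) :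
    (single s s' h).diamLE ε := by
  intro i hi
  have hN : (single s s' h).N = 1 := rfl
  have : i = 0 := by omega
  subst this
  simpa [single] using hε

/-- Concatenation of partitions of `[S,m]` and `[m,t]`. -/
noncomputable def concat {m : ℝ} (P : MvPartition S m) (Q : MvPartition m t) : MvPartition S t where
  N := P.N + Q.N
  pts := fun i => if i ≤ P.N then P.pts i else Q.pts (i - P.N)
  hN := Nat.add_pos_left P.hN _
  first := by simp [P.first]
  last := by
    have hQ := Q.hN
    simp only [if_neg (show ¬ P.N + Q.N ≤ P.N by omega)]
    have h : P.N + Q.N - P.N = Q.N := by omega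
    rw [h, Q.last]
  mono := by
    intro i hi
    rcases Nat.lt_or_ge i P.N with h | h
    · rw [if_pos (le_of_lt h), if_pos (Nat.succ_le_of_lt h)]
      exact P.mono i h
    · rcases Nat.eq_or_lt_of_le h with h' | h'
      · have hi1 : ¬ i + 1 ≤ P.N := by omega
        rw [if_pos (le_of_eq h'.symm), if_neg hi1]
        have h2 : i + 1 - P.N = 1 := by omega
        rw [h2]
        have hq := Q.mono 0 Q.hN
        rw [Q.first] at hq
        calc P.pts i = m := by rw [← h', P.last]
        _ < Q.pts 1 := hq
      · rw [if_neg (by omega), if_neg (by omega)]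
        have hq : i - P.N < Q.N := by omega
        have := Q.mono (i - P.N) hq
        have he : i + 1 - P.N = (i - P.N) + 1 := by omega
        rwa [he]

lemma concat_pts_fst {m : ℝ} (P : MvPartition S m) (Q : MvPartition m t) {i : ℕ} (hi : i ≤ P.N) :
    (P.concat Q).pts i = P.pts i := by simp [concat, hi]

lemma concat_pts_snd {m : ℝ} (P : MvPartition S m) (Q : MvPartition m t) {j : ℕ} :
    (P.concat Q).pts (P.N + j) = Q.pts j := by
  rcases Nat.eq_zero_or_pos j with h | h
  · subst h; simp [concat, P.last, Q.first]
  · have hne : ¬ P.N + j ≤ P.N := by omega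
    show (if P.N + j ≤ P.N then P.pts (P.N + j) else Q.pts (P.N + j - P.N)) = Q.pts j
    rw [if_neg hne]
    congr 1
    omega

lemma diamLE_concat {m ε : ℝ} {P : MvPartition S m} {Q : MvPartition m t}
    (hP : P.diamLE ε) (hQ : Q.diamLE ε) : (P.concat Q).diamLE ε := by
  intro i hi
  simp only [concat] at hi
  rcases Nat.lt_or_ge i P.N with h | h
  · rw [concat_pts_fst P Q (le_of_lt h), concat_pts_fst P Q (Nat.succ_le_of_lt h)]
    exact hP i h
  · have hj : i - P.N < Q.N := by omega
    have e1 : (P.concat Q).pts i = Q.pts (i - P.N) := by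
      have h1 : i = P.N + (i - P.N) := by omega
      conv_lhs => rw [h1]
      rw [concat_pts_snd]
    have e2 : (P.concat Q).pts (i + 1) = Q.pts ((i - P.N) + 1) := by
      have h2 : i + 1 = P.N + ((i - P.N) + 1) := by omega
      conv_lhs => rw [h2]
      rw [concat_pts_snd]
    rw [e1, e2]
    exact hQ _ hj

lemma mvSum_concat (δ : ℝ) {m : ℝ} (P : MvPartition S m) (Q : MvPartition m t) :
    mvSum F xbar A δ (P.concat Q) = mvSum F xbar A δ P + mvSum F xbar A δ Q := by
  rw [mvSum_eq, mvSum_eq, mvSum_eq]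
  have hN : (P.concat Q).N = P.N + Q.N := rfl
  rw [hN, Finset.sum_range_add]
  congr 1
  · refine Finset.sum_congr rfl fun i hi => ?_
    have hi' := Finset.mem_range.1 hi
    rw [concat_pts_fst P Q (le_of_lt hi'), concat_pts_fst P Q (Nat.succ_le_of_lt hi')]
  · refine Finset.sum_congr rfl fun j hj => ?_
    have : P.N + j + 1 = P.N + (j + 1) := by omega
    rw [concat_pts_snd, this, concat_pts_snd]

end MvPartition

end Aux
namespace MvPartition

variable {S t : ℝ}

/-- Uniform partition of `[s,t]` with mesh at most `ε`. -/
noncomputable def uniform (s t : ℝ) (h : s < t) (ε : ℝ) (hε : 0 < ε) : MvPartition s t where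
  N := ⌈(t - s) / ε⌉₊
  pts := fun i => s + i * ((t - s) / ⌈(t - s) / ε⌉₊)
  hN := Nat.ceil_pos.2 (div_pos (by linarith) hε)
  first := by simp
  last := by
    have hN : (0:ℝ) < ⌈(t - s) / ε⌉₊ := by
      exact_mod_cast Nat.ceil_pos.2 (div_pos (by linarith) hε)
    field_simp
    ring
  mono := by
    intro i hi
    have hN : (0:ℝ) < ⌈(t - s) / ε⌉₊ := by
      exact_mod_cast Nat.ceil_pos.2 (div_pos (by linarith) hε)
    have hstep : 0 < (t - s) / ⌈(t - s) / ε⌉₊ := div_pos (by linarith) hN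
    have : ((i:ℝ) + 1) * ((t - s) / ⌈(t - s) / ε⌉₊)
        = i * ((t - s) / ⌈(t - s) / ε⌉₊) + (t - s) / ⌈(t - s) / ε⌉₊ := by ring
    push_cast
    rw [this]
    linarith

lemma diamLE_uniform {s t : ℝ} (h : s < t) {ε : ℝ} (hε : 0 < ε) :
    (uniform s t h ε hε).diamLE ε := by
  intro i hi
  have hN : (0:ℝ) < ⌈(t - s) / ε⌉₊ := by
    exact_mod_cast Nat.ceil_pos.2 (div_pos (by linarith) hε)
  have hle : (t - s) / ε ≤ ⌈(t - s) / ε⌉₊ := Nat.le_ceil _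
  rw [div_le_iff₀ hε] at hle
  have : (uniform s t h ε hε).pts (i + 1) - (uniform s t h ε hε).pts i
      = (t - s) / ⌈(t - s) / ε⌉₊ := by
    simp only [uniform]
    push_cast
    ring
  rw [this, div_le_iff₀ hN]
  linarith

end MvPartition

variable {n k : ℕ} {F : ℝ → En n → En k → Set (En n)} {xbar : ℝ → En n} {A : Set (En k)}

lemma le_mvEtaEps {δ ε S t : ℝ} (P : MvPartition S t) (hP : P.diamLE ε) :
    mvSum F xbar A δ P ≤ mvEtaEps F xbar A δ ε S t := by
  refine le_trans ?_ (le_iSup _ P)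
  exact le_iSup (fun _ : P.diamLE ε => mvSum F xbar A δ P) hP

lemma mvEtaEps_le {δ ε S t : ℝ} {C : ℝ≥0∞}
    (h : ∀ P : MvPartition S t, P.diamLE ε → mvSum F xbar A δ P ≤ C) :
    mvEtaEps F xbar A δ ε S t ≤ C :=
  iSup_le fun P => iSup_le fun hP => h P hP

lemma mvEtaEps_add_le {δ ε S t : ℝ} {c C : ℝ≥0∞} (hSt : S < t) (hε : 0 < ε)
    (h : ∀ P : MvPartition S t, P.diamLE ε → mvSum F xbar A δ P + c ≤ C) :
    mvEtaEps F xbar A δ ε S t + c ≤ C := by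
  have hne : Nonempty {P : MvPartition S t // P.diamLE ε} :=
    ⟨⟨MvPartition.uniform S t hSt ε hε, MvPartition.diamLE_uniform hSt hε⟩⟩
  have : mvEtaEps F xbar A δ ε S t = ⨆ P : {P : MvPartition S t // P.diamLE ε},
      mvSum F xbar A δ P.1 := by
    rw [mvEtaEps, iSup_subtype']
  rw [this, ENNReal.iSup_add]
  exact iSup_le fun P => h P.1 P.2

lemma mvEtaEps_mono_eps {δ S t : ℝ} {ε ε' : ℝ} (h : ε ≤ ε') :
    mvEtaEps F xbar A δ ε S t ≤ mvEtaEps F xbar A δ ε' S t :=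
  mvEtaEps_le fun P hP => le_mvEtaEps P (fun i hi => le_trans (hP i hi) h)

lemma Eterm_mono_delta {s s' : ℝ} {δ δ' : ℝ} (h : δ ≤ δ') (hδ : 0 ≤ δ) :
    Eterm F xbar A δ s s' ≤ Eterm F xbar A δ' s s' := by
  refine iSup₂_le fun x hx => ?_
  have hx' : x ∈ xbar '' Set.Icc s s' + Metric.closedBall (0 : En n) δ' := by
    rcases (mem_dom_iff xbar).1 hx with ⟨u, hu, hxu⟩
    exact (mem_dom_iff xbar).2 ⟨u, hu, le_trans hxu h⟩
  exact le_iSup₂ (f := fun x _ => ⨆ a ∈ A,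
    EMetric.hausdorffEdist (F s' x a) (F s x a)) x hx'

lemma mvEtaEps_mono_delta {ε S t : ℝ} {δ δ' : ℝ} (h : δ ≤ δ') (hδ : 0 ≤ δ) :
    mvEtaEps F xbar A δ ε S t ≤ mvEtaEps F xbar A δ' ε S t :=
  mvEtaEps_le fun P hP => le_trans
    (Finset.sum_le_sum fun i _ => Eterm_mono_delta h hδ) (le_mvEtaEps P hP)

lemma mvEtaDelta_le_mvEtaEps {δ S t : ℝ} {ε : ℝ} (hε : 0 < ε) :
    mvEtaDelta F xbar A δ S t ≤ mvEtaEps F xbar A δ ε S t := by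
  exact iInf_le_of_le ε (iInf_le_of_le hε le_rfl)

lemma le_mvEtaDelta {δ S t : ℝ} {C : ℝ≥0∞}
    (h : ∀ ε : ℝ, 0 < ε → C ≤ mvEtaEps F xbar A δ ε S t) :
    C ≤ mvEtaDelta F xbar A δ S t :=
  le_iInf fun ε => le_iInf fun hε => h ε hε

lemma mvEtaEps_mono_t {δ ε S s s' : ℝ} (hs : S < s) (hss' : s ≤ s') (hε : 0 < ε) :
    mvEtaEps F xbar A δ ε S s ≤ mvEtaEps F xbar A δ ε S s' := by
  rcases eq_or_lt_of_le hss' with rfl | h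
  · exact le_rfl
  · refine mvEtaEps_le fun P hP => ?_
    have := le_mvEtaEps (F := F) (xbar := xbar) (A := A) (δ := δ)
      (P.concat (MvPartition.uniform s s' h ε hε))
      (MvPartition.diamLE_concat hP (MvPartition.diamLE_uniform h hε))
    rw [MvPartition.mvSum_concat] at this
    exact le_trans le_self_add this
lemma hausdorff_le_of_subsets {n : ℕ} {B C : Set (En n)} {r : ℝ}
    (h1 : B ⊆ C + Metric.closedBall 0 r) (h2 : C ⊆ B + Metric.closedBall 0 r) :
    EMetric.hausdorffEdist B C ≤ ENNReal.ofReal r := by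
  have key : ∀ (D E : Set (En n)), D ⊆ E + Metric.closedBall 0 r →
      ∀ x ∈ D, EMetric.infEdist x E ≤ ENNReal.ofReal r := by
    intro D E hDE x hx
    rcases hDE hx with ⟨e, he, z, hz, rfl⟩
    refine le_trans (EMetric.infEdist_le_edist_of_mem he) ?_
    rw [edist_dist]
    exact ENNReal.ofReal_le_ofReal (by
      simpa [dist_eq_norm] using (mem_closedBall_iff_norm.1 hz))
  exact EMetric.hausdorffEdist_le_of_infEdist (key B C h1) (key C B h2)

/-- The C2 modulus gives a two-sided Hausdorff estimate. -/
lemma hC2_hausdorff {n k : ℕ} {F : ℝ → En n → En k → Set (En n)} {xbar : ℝ → En n}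
    {A : Set (En k)} {S T δbar : ℝ} {γ : ℝ → ℝ}
    (hγ : ∀ t ∈ Set.Icc S T, ∀ x ∈ Metric.closedBall (xbar t) δbar,
      ∀ x' ∈ Metric.closedBall (xbar t) δbar, ∀ a ∈ A, ∀ a' ∈ A,
        F t x a ⊆ F t x' a' + Metric.closedBall (0 : En n) (γ (‖x - x'‖ + ‖a - a'‖)))
    {t : ℝ} (ht : t ∈ Set.Icc S T) {x x' : En n}
    (hx : x ∈ Metric.closedBall (xbar t) δbar) (hx' : x' ∈ Metric.closedBall (xbar t) δbar)
    {a a' : En k} (ha : a ∈ A) (ha' : a' ∈ A) :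
    EMetric.hausdorffEdist (F t x a) (F t x' a')
      ≤ ENNReal.ofReal (γ (‖x - x'‖ + ‖a - a'‖)) := by
  refine hausdorff_le_of_subsets (hγ t ht x hx x' hx' a ha a' ha') ?_
  have := hγ t ht x' hx' x hx a' ha' a ha
  rwa [norm_sub_rev x' x, norm_sub_rev a' a] at this

/-- From the tendsto hypothesis on `γ`: a usable smallness statement. -/
lemma gamma_small {γ : ℝ → ℝ} (hγ : Tendsto γ (𝓝[>] (0:ℝ)) (𝓝 0)) {θ : ℝ} (hθ : 0 < θ) :
    ∃ ρ > 0, ∀ s : ℝ, 0 < s → s ≤ ρ → γ s ≤ θ := by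
  rw [Metric.tendsto_nhdsWithin_nhds] at hγ
  rcases hγ θ hθ with ⟨ρ, hρ, h⟩
  refine ⟨ρ / 2, by linarith, fun s hs hsρ => ?_⟩
  have := h (Set.mem_Ioi.2 hs) (by rw [Real.dist_eq, sub_zero, abs_of_pos hs]; linarith)
  rw [Real.dist_eq, sub_zero] at this
  exact le_of_lt (lt_of_abs_lt this)

/-- Uniform continuity of `x̄` on `[S,T]`. -/
lemma xbar_unif {n : ℕ} {xbar : ℝ → En n} {S T : ℝ}
    (hx : ContinuousOn xbar (Set.Icc S T)) {ρ : ℝ} (hρ : 0 < ρ) :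
    ∃ ω > 0, ∀ u ∈ Set.Icc S T, ∀ v ∈ Set.Icc S T, |u - v| ≤ ω → ‖xbar u - xbar v‖ ≤ ρ := by
  have := (isCompact_Icc (a := S) (b := T)).uniformContinuousOn_of_continuous hx
  rw [Metric.uniformContinuousOn_iff] at this
  rcases this ρ hρ with ⟨ω, hω, h⟩
  refine ⟨ω / 2, by linarith, fun u hu v hv huv => ?_⟩
  have := h u hu v hv (by rw [Real.dist_eq]; linarith [abs_nonneg (u - v)])
  rw [dist_eq_norm] at this
  exact le_of_lt this

/-- Bound from C1: Hausdorff distance between values of `F` is at most `2c`. -/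
lemma hC1_bounded {n k : ℕ} {F : ℝ → En n → En k → Set (En n)} {xbar : ℝ → En n}
    {A : Set (En k)} {S T δbar c : ℝ}
    (hne : ∀ t ∈ Set.Icc S T, ∀ x : En n, ∀ a ∈ A, (F t x a).Nonempty)
    (hbd : ∀ t ∈ Set.Icc S T, ∀ x ∈ Metric.closedBall (xbar t) δbar, ∀ a ∈ A,
      F t x a ⊆ Metric.closedBall (0 : En n) c)
    {t t' : ℝ} (ht : t ∈ Set.Icc S T) (ht' : t' ∈ Set.Icc S T) {x : En n}
    (hx : x ∈ Metric.closedBall (xbar t) δbar) (hx' : x ∈ Metric.closedBall (xbar t') δbar)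
    {a : En k} (ha : a ∈ A) :
    EMetric.hausdorffEdist (F t x a) (F t' x a) ≤ ENNReal.ofReal (2 * c) := by
  have key : ∀ (u u' : ℝ), u ∈ Set.Icc S T → u' ∈ Set.Icc S T →
      x ∈ Metric.closedBall (xbar u) δbar → x ∈ Metric.closedBall (xbar u') δbar →
      ∀ v ∈ F u x a, EMetric.infEdist v (F u' x a) ≤ ENNReal.ofReal (2 * c) := by
    intro u u' hu hu' hxu hxu' v hv
    rcases hne u' hu' x a ha with ⟨w, hw⟩
    refine le_trans (EMetric.infEdist_le_edist_of_mem hw) ?_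
    rw [edist_dist]
    refine ENNReal.ofReal_le_ofReal ?_
    have h1 := mem_closedBall_iff_norm.1 (hbd u hu x hxu a ha hv)
    have h2 := mem_closedBall_iff_norm.1 (hbd u' hu' x hxu' a ha hw)
    rw [sub_zero] at h1 h2
    calc dist v w ≤ ‖v‖ + ‖w‖ := by
          rw [dist_eq_norm]; exact norm_sub_le v w
    _ ≤ 2 * c := by linarith
  exact EMetric.hausdorffEdist_le_of_infEdist
    (key t t' ht ht' hx hx') (key t' t ht' ht hx' hx)
lemma pow_half_ne_zero' (j : ℕ) : (2⁻¹ : ℝ≥0∞)^j ≠ 0 :=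
  pow_ne_zero j (ENNReal.inv_ne_zero.2 ENNReal.ofNat_ne_top)

lemma pow_half_ne_top' (j : ℕ) : (2⁻¹ : ℝ≥0∞)^j ≠ ⊤ :=
  ENNReal.pow_ne_top (ENNReal.inv_ne_top.2 two_ne_zero)

lemma Eterm_self {δ s : ℝ} : Eterm F xbar A δ s s = 0 := by
  rw [← le_zero_iff]
  exact Eterm_le F xbar A fun x _ a _ => by
    rw [EMetric.hausdorffEdist, EMetric.hausdorffEdist_self]

lemma key_cauchy {δbar ε₀ S s s' : ℝ} (hε₀ : 0 < ε₀) (hs : S < s) (hss' : s < s')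
    (hdiam : s' - s ≤ ε₀) :
    Eterm F xbar A δbar s s' + mvEtaEps F xbar A δbar ε₀ S s
      ≤ mvEtaEps F xbar A δbar ε₀ S s' := by
  rw [add_comm]
  refine mvEtaEps_add_le hs hε₀ fun P hP => ?_
  have := le_mvEtaEps (F := F) (xbar := xbar) (A := A) (δ := δbar) (ε := ε₀)
    (P.concat (MvPartition.single s s' hss'))
    (MvPartition.diamLE_concat hP (MvPartition.diamLE_single hss' hdiam))
  rwa [MvPartition.mvSum_concat, MvPartition.mvSum_single] at this

lemma exists_small_cauchy {δbar ε₀ S T : ℝ} (hST : S < T) (hε₀ : 0 < ε₀)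
    (hgtop : mvEtaEps F xbar A δbar ε₀ S T ≠ ⊤) {θ : ℝ≥0∞} (hθ : 0 < θ) :
    ∃ s₀, S < s₀ ∧ s₀ < T ∧ s₀ - S ≤ ε₀ ∧ ∀ s s', S < s → s ≤ s' → s' ≤ s₀ →
      Eterm F xbar A δbar s s' ≤ θ := by
  set g : ℝ → ℝ≥0∞ := fun s => mvEtaEps F xbar A δbar ε₀ S s with hg
  set L : ℝ≥0∞ := ⨅ s ∈ Set.Ioc S T, g s with hL
  have hLle : L ≤ g T := iInf₂_le T ⟨hST, le_rfl⟩
  have hLtop : L ≠ ⊤ := ne_top_of_le_ne_top hgtop hLle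
  have hlt : L < L + θ := ENNReal.lt_add_right hLtop hθ.ne'
  obtain ⟨s₁, hs₁⟩ := iInf_lt_iff.1 (lt_of_le_of_lt le_rfl hlt)
  obtain ⟨hs₁mem, hgs₁⟩ := iInf_lt_iff.1 hs₁
  set s₀ := min s₁ (min (S + ε₀) ((S + T) / 2)) with hs₀def
  have hs₀1 : s₀ ≤ s₁ := min_le_left _ _
  have hs₀2 : s₀ ≤ S + ε₀ := le_trans (min_le_right _ _) (min_le_left _ _)
  have hs₀3 : s₀ ≤ (S + T) / 2 := le_trans (min_le_right _ _) (min_le_right _ _)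
  have hSs₀ : S < s₀ := lt_min hs₁mem.1 (lt_min (by linarith) (by linarith))
  refine ⟨s₀, hSs₀, by linarith, by linarith, ?_⟩
  intro s s' hs hss' hs'0
  rcases eq_or_lt_of_le hss' with rfl | hlt'
  · rw [Eterm_self]; exact zero_le
  have hSs' : S < s' := lt_of_lt_of_le hs hss'
  have hs'T : s' ≤ T := by
    have h2 := le_trans hs'0 hs₀3
    linarith
  have hsT : s ≤ T := le_trans hss' hs'T
  have hgsle : g s ≤ g T := mvEtaEps_mono_t hs hsT hε₀
  have hgs_ne : g s ≠ ⊤ := ne_top_of_le_ne_top hgtop hgsle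
  have hdiam : s' - s ≤ ε₀ := by
    have h1 := le_trans hs'0 hs₀2
    linarith
  have hkey := key_cauchy (F := F) (xbar := xbar) (A := A) (δbar := δbar) hε₀ hs hlt' hdiam
  have hup : g s' ≤ g s + θ := by
    calc g s' ≤ g s₀ := mvEtaEps_mono_t hSs' hs'0 hε₀
    _ ≤ g s₁ := mvEtaEps_mono_t hSs₀ hs₀1 hε₀
    _ ≤ L + θ := hgs₁.le
    _ ≤ g s + θ := add_le_add_left (iInf₂_le s ⟨hs, hsT⟩) θ
  have hfin : Eterm F xbar A δbar s s' + g s ≤ θ + g s := by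
    refine le_trans hkey (le_trans hup ?_)
    rw [add_comm]
  exact (ENNReal.add_le_add_iff_right hgs_ne).1 hfin
lemma right_limit_approx {S T δbar ε₀ : ℝ} (hST : S < T) (hε₀ : 0 < ε₀)
    (hx : ContinuousOn xbar (Set.Icc S T))
    (hgtop : mvEtaEps F xbar A δbar ε₀ S T ≠ ⊤)
    (hne : ∀ t ∈ Set.Icc S T, ∀ x : En n, ∀ a ∈ A, (F t x a).Nonempty)
    {δ₂ : ℝ} (hδ₂ : 0 ≤ δ₂) (hδ₂bar : δ₂ < δbar)
    {θ₁ : ℝ≥0∞} (hθ₁ : 0 < θ₁) (hθ₁top : θ₁ ≠ ⊤) :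
    ∃ s₀, S < s₀ ∧ s₀ < T ∧ ∀ s, S < s → s ≤ s₀ →
      ∀ x ∈ Metric.closedBall (xbar S) δ₂, ∀ a ∈ A,
        (rightLim F T S x a).Nonempty ∧
        EMetric.hausdorffEdist (F s x a) (rightLim F T S x a) ≤ 4 * θ₁ := by
  obtain ⟨ω, hω, hωs⟩ := xbar_unif hx (show (0:ℝ) < δbar - δ₂ by linarith)
  have hrc : ∀ j : ℕ, ∃ r, S < r ∧ r < T ∧ r - S ≤ ε₀ ∧ ∀ s s', S < s → s ≤ s' → s' ≤ r →
      Eterm F xbar A δbar s s' ≤ θ₁ * 2⁻¹ ^ j := fun j =>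
    exists_small_cauchy hST hε₀ hgtop
      (ENNReal.mul_pos hθ₁.ne' (pow_half_ne_zero' j))
  choose r hrS hrT hrε hr using hrc
  set s₀ := min (r 0) (min (S + ω) ((S + T) / 2)) with hs₀def
  have hs₀r : s₀ ≤ r 0 := min_le_left _ _
  have hs₀ω : s₀ ≤ S + ω := le_trans (min_le_right _ _) (min_le_left _ _)
  have hs₀T2 : s₀ ≤ (S + T) / 2 := le_trans (min_le_right _ _) (min_le_right _ _)
  have hSs₀ : S < s₀ := lt_min (hrS 0) (lt_min (by linarith) (by linarith))
  have hs₀T : s₀ < T := by linarith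
  refine ⟨s₀, hSs₀, hs₀T, ?_⟩
  intro s hs hss₀ x hxball a ha
  -- x is within δbar of x̄(u) for all u in (S, s₀]
  have hxmem : ∀ u, S < u → u ≤ s₀ → x ∈ Metric.closedBall (xbar u) δbar := by
    intro u h1 h2
    have hu : u ∈ Set.Icc S T := ⟨h1.le, by linarith⟩
    have hS : S ∈ Set.Icc S T := ⟨le_rfl, hST.le⟩
    have hd := hωs S hS u hu (by rw [abs_of_nonpos (by linarith)]; linarith)
    have h3 : dist x (xbar S) ≤ δ₂ := mem_closedBall.1 hxball
    rw [mem_closedBall]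
    calc dist x (xbar u) ≤ dist x (xbar S) + dist (xbar S) (xbar u) := dist_triangle _ _ _
    _ ≤ δ₂ + (δbar - δ₂) := add_le_add h3 (by rw [dist_eq_norm]; exact hd)
    _ = δbar := by ring
  have hEd : ∀ u u', S < u → u ≤ u' → u' ≤ s₀ → ∀ j, u' ≤ r j →
      EMetric.hausdorffEdist (F u' x a) (F u x a) ≤ θ₁ * 2⁻¹ ^ j := by
    intro u u' h1 h2 h3 j h4
    refine le_trans (le_Eterm F xbar A ?_ ha) (hr j u u' h1 h2 h4)
    refine (mem_dom_iff xbar).2 ⟨u, ⟨le_rfl, h2⟩, ?_⟩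
    have := hxmem u h1 (le_trans h2 h3)
    rw [mem_closedBall, dist_eq_norm] at this
    exact this
  -- decreasing sequence u j
  set u : ℕ → ℝ := fun j => Nat.rec s (fun j uj => min uj (r (j + 1))) j with hudef
  have hu0 : u 0 = s := rfl
  have husucc : ∀ j, u (j + 1) = min (u j) (r (j + 1)) := fun j => rfl
  have huS : ∀ j, S < u j := by
    intro j; induction j with
    | zero => exact hs
    | succ m ih => rw [husucc]; exact lt_min ih (hrS (m + 1))
  have humono : ∀ j, u (j + 1) ≤ u j := fun j => min_le_left _ _
  have hus : ∀ j, u j ≤ s := by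
    intro j; induction j with
    | zero => exact le_rfl
    | succ m ih => exact le_trans (humono m) ih
  have hur : ∀ j, u j ≤ r j := by
    intro j; cases j with
    | zero => exact le_trans hss₀ hs₀r
    | succ m => exact min_le_right _ _
  have hus₀ : ∀ j, u j ≤ s₀ := fun j => le_trans (hus j) hss₀
  -- one-step point selection
  have hstep : ∀ j (y : En n), y ∈ F (u j) x a →
      ∃ z ∈ F (u (j + 1)) x a, edist y z ≤ 2 * θ₁ * 2⁻¹ ^ j := by
    intro j y hy
    have hd : EMetric.hausdorffEdist (F (u j) x a) (F (u (j + 1)) x a) ≤ θ₁ * 2⁻¹ ^ j := by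
      exact hEd (u (j + 1)) (u j) (huS (j + 1)) (humono j) (hus₀ j) j (hur j)
    have h1 : θ₁ * 2⁻¹ ^ j ≠ 0 := mul_ne_zero hθ₁.ne' (pow_half_ne_zero' j)
    have h2 : θ₁ * 2⁻¹ ^ j ≠ ⊤ := ENNReal.mul_ne_top hθ₁top (pow_half_ne_top' j)
    have hlt : EMetric.hausdorffEdist (F (u j) x a) (F (u (j + 1)) x a)
        < 2 * θ₁ * 2⁻¹ ^ j := by
      refine lt_of_le_of_lt hd ?_
      calc θ₁ * 2⁻¹ ^ j < θ₁ * 2⁻¹ ^ j + θ₁ * 2⁻¹ ^ j := ENNReal.lt_add_right h2 h1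
      _ = 2 * θ₁ * 2⁻¹ ^ j := by ring
    obtain ⟨z, hz, hez⟩ := EMetric.exists_edist_lt_of_hausdorffEdist_lt hy hlt
    exact ⟨z, hz, hez.le⟩
  -- construction of a limit point for any starting point v ∈ F s x a
  have hbuild : ∀ v ∈ F s x a, ∃ w ∈ rightLim F T S x a, edist v w ≤ 4 * θ₁ := by
    intro v hv
    have hv0 : v ∈ F (u 0) x a := hv
    let Pt : ℕ → Type _ := fun j => {y : En n // y ∈ F (u j) x a}
    let pstep : ∀ j, Pt j → Pt (j + 1) := fun j y =>
      ⟨Classical.choose (hstep j y.1 y.2), (Classical.choose_spec (hstep j y.1 y.2)).1⟩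
    let pp : ∀ j, Pt j := fun j => Nat.rec (⟨v, hv0⟩ : Pt 0) pstep j
    let p : ℕ → En n := fun j => (pp j).1
    have hpmem : ∀ j, p j ∈ F (u j) x a := fun j => (pp j).2
    have hpstep : ∀ j, edist (p j) (p (j + 1)) ≤ (2 * θ₁) * 2⁻¹ ^ j := by
      intro j
      have he : p (j + 1) = Classical.choose (hstep j (pp j).1 (pp j).2) := rfl
      rw [he]
      exact (Classical.choose_spec (hstep j (pp j).1 (pp j).2)).2
    have hC : (2 * θ₁ : ℝ≥0∞) ≠ ⊤ := ENNReal.mul_ne_top (by norm_num) hθ₁top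
    have hr2 : (2⁻¹ : ℝ≥0∞) < 1 := by norm_num
    have hcauchy := cauchySeq_of_edist_le_geometric 2⁻¹ (2 * θ₁) hr2 hC hpstep
    obtain ⟨w, hw⟩ := cauchySeq_tendsto_of_complete hcauchy
    have hdist : ∀ j, edist (p j) w ≤ 4 * θ₁ * 2⁻¹ ^ j := by
      intro j
      have := edist_le_of_edist_le_geometric_of_tendsto 2⁻¹ (2 * θ₁) hpstep hw j
      rwa [ENNReal.one_sub_inv_two, div_eq_mul_inv, inv_inv,
        show (2 * θ₁) * 2⁻¹ ^ j * 2 = 4 * θ₁ * 2⁻¹ ^ j by ring] at this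
    have hwR : w ∈ rightLim F T S x a := by
      show Tendsto (fun s' => EMetric.infEdist w (F s' x a)) (𝓝[Set.Ioc S T] S) (𝓝 0)
      refine ENNReal.tendsto_nhds_zero.2 fun ε hε => ?_
      have h5top : (5 * θ₁ : ℝ≥0∞) ≠ ⊤ := ENNReal.mul_ne_top (by norm_num) hθ₁top
      have h5ne : (5 * θ₁ : ℝ≥0∞) ≠ 0 := by
        refine mul_ne_zero (by norm_num) hθ₁.ne'
      have hdiv : (ε / (5 * θ₁) : ℝ≥0∞) ≠ 0 := (ENNReal.div_pos hε.ne' h5top).ne'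
      obtain ⟨j, hj⟩ := ENNReal.exists_inv_two_pow_lt hdiv
      have hjle : 5 * θ₁ * 2⁻¹ ^ j ≤ ε := by
        calc 5 * θ₁ * 2⁻¹ ^ j ≤ 5 * θ₁ * (ε / (5 * θ₁)) := mul_le_mul_right hj.le _
        _ = ε := ENNReal.mul_div_cancel h5ne h5top
      have h1 : ∀ᶠ u' in 𝓝[Set.Ioc S T] S, u' ∈ Set.Ioc S T := eventually_mem_nhdsWithin
      have h2 : ∀ᶠ u' in 𝓝[Set.Ioc S T] S, u' < u j :=
        mem_nhdsWithin_of_mem_nhds (Iio_mem_nhds (huS j))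
      filter_upwards [h1, h2] with u' hu'mem hu'lt
      have hstep1 : EMetric.infEdist w (F u' x a)
          ≤ EMetric.infEdist (p j) (F u' x a) + edist w (p j) :=
        EMetric.infEdist_le_infEdist_add_edist
      have hstep2 : EMetric.infEdist (p j) (F u' x a)
          ≤ EMetric.hausdorffEdist (F (u j) x a) (F u' x a) :=
        EMetric.infEdist_le_hausdorffEdist_of_mem (hpmem j)
      have hstep3 : EMetric.hausdorffEdist (F (u j) x a) (F u' x a) ≤ θ₁ * 2⁻¹ ^ j :=
        hEd u' (u j) hu'mem.1 hu'lt.le (hus₀ j) j (hur j)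
      have hstep4 : edist w (p j) ≤ 4 * θ₁ * 2⁻¹ ^ j := by
        rw [edist_comm]; exact hdist j
      calc EMetric.infEdist w (F u' x a)
          ≤ θ₁ * 2⁻¹ ^ j + 4 * θ₁ * 2⁻¹ ^ j :=
            le_trans hstep1 (add_le_add (le_trans hstep2 hstep3) hstep4)
      _ = 5 * θ₁ * 2⁻¹ ^ j := by ring
      _ ≤ ε := hjle
    refine ⟨w, hwR, ?_⟩
    have := hdist 0
    rwa [show (p 0 : En n) = v from rfl, pow_zero, mul_one] at this
  -- part (a): points of the right limit are close to F s x a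
  have hback : ∀ w' ∈ rightLim F T S x a, EMetric.infEdist w' (F s x a) ≤ 4 * θ₁ := by
    intro w' hw'
    have hw'' : Tendsto (fun s' => EMetric.infEdist w' (F s' x a)) (𝓝[Set.Ioc S T] S) (𝓝 0) :=
      hw'
    haveI : (𝓝[Set.Ioc S T] S).NeBot := by
      refine mem_closure_iff_nhdsWithin_neBot.1 ?_
      rw [closure_Ioc hST.ne]
      exact ⟨le_rfl, hST.le⟩
    have h1 := ENNReal.tendsto_nhds_zero.1 hw'' θ₁ hθ₁
    have h2 : ∀ᶠ u' in 𝓝[Set.Ioc S T] S, u' ∈ Set.Ioc S T := eventually_mem_nhdsWithin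
    have h3 : ∀ᶠ u' in 𝓝[Set.Ioc S T] S, u' < s :=
      mem_nhdsWithin_of_mem_nhds (Iio_mem_nhds hs)
    obtain ⟨u', hu'1, hu'2, hu'3⟩ := (h1.and (h2.and h3)).exists
    have hd : EMetric.hausdorffEdist (F u' x a) (F s x a) ≤ θ₁ := by
      have := hEd u' s hu'2.1 hu'3.le hss₀ 0 (le_trans hss₀ hs₀r)
      rw [pow_zero, mul_one] at this
      rwa [EMetric.hausdorffEdist, EMetric.hausdorffEdist_comm]
    calc EMetric.infEdist w' (F s x a)
        ≤ EMetric.infEdist w' (F u' x a) + EMetric.hausdorffEdist (F u' x a) (F s x a) :=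
          EMetric.infEdist_le_infEdist_add_hausdorffEdist
    _ ≤ θ₁ + θ₁ := add_le_add hu'1 hd
    _ ≤ 4 * θ₁ := by
        have : (2 : ℝ≥0∞) * θ₁ ≤ 4 * θ₁ := mul_le_mul_left (by norm_num) θ₁
        calc θ₁ + θ₁ = 2 * θ₁ := by ring
        _ ≤ 4 * θ₁ := this
  have hsIcc : s ∈ Set.Icc S T := ⟨hs.le, by linarith⟩
  obtain ⟨v, hv⟩ := hne s hsIcc x a ha
  obtain ⟨w, hwR, _⟩ := hbuild v hv
  refine ⟨⟨w, hwR⟩, ?_⟩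
  refine EMetric.hausdorffEdist_le_of_infEdist ?_ hback
  intro v' hv'
  obtain ⟨w', hw'R, hw'd⟩ := hbuild v' hv'
  exact le_trans (EMetric.infEdist_le_edist_of_mem hw'R) hw'd
lemma Ftilde_interior {S T δbar τ : ℝ} (h1 : τ ≠ S) (h2 : τ ≠ T) (x : En n) (a : En k) :
    Ftilde F xbar S T δbar τ x a = F τ x a := by
  rw [Ftilde, if_neg (by tauto), if_neg (by tauto)]

lemma Ftilde_at_S {S T δbar : ℝ} {x : En n} (h : ‖x - xbar S‖ < δbar) (a : En k) :
    Ftilde F xbar S T δbar S x a = rightLim F T S x a := by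
  rw [Ftilde, if_pos ⟨rfl, h⟩]

lemma Eterm_congr {G G' : ℝ → En n → En k → Set (En n)} {δ s s' : ℝ}
    (h1 : ∀ x a, G s x a = G' s x a) (h2 : ∀ x a, G s' x a = G' s' x a) :
    Eterm G xbar A δ s s' = Eterm G' xbar A δ s s' := by
  simp only [Eterm, h1, h2]

namespace MvPartition

variable {S t : ℝ}

/-- Insert an extra point `s` between `S` and the first partition point. -/
noncomputable def insertFront (P : MvPartition S t) (s : ℝ) (h1 : S < s) (h2 : s < P.pts 1) :
    MvPartition S t where
  N := P.N + 1
  pts := fun i => match i with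
    | 0 => S
    | 1 => s
    | (j + 2) => P.pts (j + 1)
  hN := Nat.succ_pos _
  first := rfl
  last := by
    have h := P.hN
    obtain ⟨m, hm⟩ : ∃ m, P.N = m + 1 := ⟨P.N - 1, by omega⟩
    show (match P.N + 1 with
      | 0 => S
      | 1 => s
      | (j + 2) => P.pts (j + 1)) = t
    rw [hm]
    show P.pts (m + 1) = t
    rw [← hm, P.last]
  mono := by
    intro i hi
    match i with
    | 0 => exact h1
    | 1 => exact h2
    | (j + 2) =>
      show P.pts (j + 1) < P.pts (j + 2)
      exact P.mono (j + 1) (by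
        have : j + 2 < P.N + 1 := hi
        omega)

lemma insertFront_pts2 {P : MvPartition S t} {s : ℝ} (h1 : S < s) (h2 : s < P.pts 1) (j : ℕ) :
    (P.insertFront s h1 h2).pts (j + 2) = P.pts (j + 1) := rfl

lemma insertFront_diamLE {P : MvPartition S t} {s ε ε' : ℝ} (h1 : S < s) (h2 : s < P.pts 1)
    (hP : P.diamLE ε') (hee : ε' ≤ ε) (ht1 : P.pts 1 - S ≤ ε') :
    (P.insertFront s h1 h2).diamLE ε := by
  intro i hi
  match i with
  | 0 =>
    show s - S ≤ ε
    linarith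
  | 1 =>
    show P.pts 1 - s ≤ ε
    linarith
  | (j + 2) =>
    show P.pts (j + 2) - P.pts (j + 1) ≤ ε
    have : j + 2 < P.N + 1 := hi
    exact le_trans (hP (j + 1) (by omega)) hee

end MvPartition

lemma head_tail {δ S t : ℝ} (G : ℝ → En n → En k → Set (En n)) (P : MvPartition S t) :
    mvSum G xbar A δ P = Eterm G xbar A δ S (P.pts 1)
      + ∑ i ∈ Finset.range (P.N - 1), Eterm G xbar A δ (P.pts (i + 1)) (P.pts (i + 2)) := by
  rw [mvSum_eq]
  have hN : P.N = (P.N - 1) + 1 := by have := P.hN; omega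
  rw [hN, Finset.sum_range_succ']
  rw [add_comm, P.first]
  have e : P.N - 1 + 1 - 1 = P.N - 1 := by omega
  rw [e]

lemma insertFront_sum {δ S t : ℝ} (G : ℝ → En n → En k → Set (En n)) (P : MvPartition S t)
    {s : ℝ} (h1 : S < s) (h2 : s < P.pts 1) :
    mvSum G xbar A δ (P.insertFront s h1 h2)
      = Eterm G xbar A δ S s + Eterm G xbar A δ s (P.pts 1)
        + ∑ i ∈ Finset.range (P.N - 1), Eterm G xbar A δ (P.pts (i + 1)) (P.pts (i + 2)) := by
  rw [mvSum_eq]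
  have hN : (P.insertFront s h1 h2).N = ((P.N - 1) + 1) + 1 := by
    have := P.hN
    show P.N + 1 = _
    omega
  rw [hN, Finset.sum_range_succ', Finset.sum_range_succ']
  have e0 : Eterm G xbar A δ ((P.insertFront s h1 h2).pts 0) ((P.insertFront s h1 h2).pts 1)
      = Eterm G xbar A δ S s := rfl
  have e1 : Eterm G xbar A δ ((P.insertFront s h1 h2).pts 1) ((P.insertFront s h1 h2).pts 2)
      = Eterm G xbar A δ s (P.pts 1) := rfl
  have e2 : ∀ i, Eterm G xbar A δ ((P.insertFront s h1 h2).pts (i + 1 + 1))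
      ((P.insertFront s h1 h2).pts (i + 1 + 1 + 1))
      = Eterm G xbar A δ (P.pts (i + 1)) (P.pts (i + 2)) := fun i => rfl
  rw [e0, e1]
  rw [Finset.sum_congr rfl (fun i _ => e2 i)]
  ring

lemma le_mvEtaDelta_add {δ S t : ℝ} {G : ℝ → En n → En k → Set (En n)} {c C : ℝ≥0∞}
    (h : ∀ ε, 0 < ε → C ≤ mvEtaEps G xbar A δ ε S t + c) :
    C ≤ mvEtaDelta G xbar A δ S t + c := by
  have he : mvEtaDelta G xbar A δ S t + c
      = ⨅ ε : {ε : ℝ // 0 < ε}, (mvEtaEps G xbar A δ ε.1 S t + c) := by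
    rw [mvEtaDelta, iInf_subtype', ENNReal.iInf_add]
  rw [he]
  exact le_iInf fun ε => h ε.1 ε.2

lemma mvEtaDelta_mono_delta {S t : ℝ} {δ δ' : ℝ} (h : δ ≤ δ') (hδ : 0 ≤ δ) :
    mvEtaDelta F xbar A δ S t ≤ mvEtaDelta F xbar A δ' S t :=
  le_iInf fun ε => le_iInf fun hε =>
    le_trans (mvEtaDelta_le_mvEtaEps hε) (mvEtaEps_mono_delta h hδ)

/-- C2-type bound with an explicit smallness threshold. -/
lemma gamma_bound {S T δbar : ℝ} {γ : ℝ → ℝ}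
    (hγsub : ∀ t ∈ Set.Icc S T, ∀ x ∈ Metric.closedBall (xbar t) δbar,
      ∀ x' ∈ Metric.closedBall (xbar t) δbar, ∀ a ∈ A, ∀ a' ∈ A,
        F t x a ⊆ F t x' a' + Metric.closedBall (0 : En n) (γ (‖x - x'‖ + ‖a - a'‖)))
    {θ ρ : ℝ} (hθ : 0 ≤ θ) (hγρ : ∀ d, 0 < d → d ≤ ρ → γ d ≤ θ)
    {τ : ℝ} (hτ : τ ∈ Set.Icc S T) {x x' : En n}
    (hx : x ∈ Metric.closedBall (xbar τ) δbar) (hx' : x' ∈ Metric.closedBall (xbar τ) δbar)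
    {a : En k} (ha : a ∈ A) (hρ : ‖x - x'‖ ≤ ρ) :
    EMetric.hausdorffEdist (F τ x a) (F τ x' a) ≤ ENNReal.ofReal θ := by
  rcases eq_or_ne x x' with rfl | hne
  · rw [EMetric.hausdorffEdist, EMetric.hausdorffEdist_self]
    exact zero_le
  · have hpos : 0 < ‖x - x'‖ := by
      rw [norm_pos_iff, sub_ne_zero]
      exact hne
    have := hC2_hausdorff hγsub hτ hx hx' ha ha
    rw [sub_self, norm_zero, add_zero] at this
    exact le_trans this (ENNReal.ofReal_le_ofReal (hγρ _ hpos hρ))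
lemma rightLim_gamma {S T δbar ε₀ : ℝ} (hST : S < T) (hε₀ : 0 < ε₀)
    (hx : ContinuousOn xbar (Set.Icc S T))
    (hgtop : mvEtaEps F xbar A δbar ε₀ S T ≠ ⊤)
    (hne : ∀ t ∈ Set.Icc S T, ∀ x : En n, ∀ a ∈ A, (F t x a).Nonempty)
    {γ : ℝ → ℝ}
    (hγsub : ∀ t ∈ Set.Icc S T, ∀ x ∈ Metric.closedBall (xbar t) δbar,
      ∀ x' ∈ Metric.closedBall (xbar t) δbar, ∀ a ∈ A, ∀ a' ∈ A,
        F t x a ⊆ F t x' a' + Metric.closedBall (0 : En n) (γ (‖x - x'‖ + ‖a - a'‖)))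
    {θ ρ : ℝ} (hθ : 0 ≤ θ) (hγρ : ∀ d, 0 < d → d ≤ ρ → γ d ≤ θ)
    {δ₂ : ℝ} (hδ₂ : 0 ≤ δ₂) (hδ₂b : δ₂ < δbar)
    {x x' : En n} (hx1 : x ∈ Metric.closedBall (xbar S) δ₂)
    (hx2 : x' ∈ Metric.closedBall (xbar S) δ₂)
    {a : En k} (ha : a ∈ A) (hxx' : ‖x - x'‖ ≤ ρ) :
    EMetric.hausdorffEdist (rightLim F T S x a) (rightLim F T S x' a)
      ≤ ENNReal.ofReal θ := by
  refine ENNReal.le_of_forall_pos_le_add fun ϑ hϑ _ => ?_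
  set θ₁ : ℝ≥0∞ := (ϑ : ℝ≥0∞) / 8 with hθ₁def
  have hθ₁pos : 0 < θ₁ := ENNReal.div_pos (by exact_mod_cast hϑ.ne') (by norm_num)
  have hθ₁top : θ₁ ≠ ⊤ := (ENNReal.div_lt_top ENNReal.coe_ne_top (by norm_num)).ne
  obtain ⟨s₀, hSs₀, hs₀T, happrox⟩ :=
    right_limit_approx hST hε₀ hx hgtop hne hδ₂ hδ₂b hθ₁pos hθ₁top
  obtain ⟨ω, hω, hωs⟩ := xbar_unif hx (show (0:ℝ) < δbar - δ₂ by linarith)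
  set s := min s₀ (S + ω) with hsdef
  have hSs : S < s := lt_min hSs₀ (by linarith)
  have hss₀ : s ≤ s₀ := min_le_left _ _
  have hsω : s ≤ S + ω := min_le_right _ _
  have hsIcc : s ∈ Set.Icc S T := ⟨hSs.le, by nlinarith [min_le_left s₀ (S + ω)]⟩
  have hball : ∀ y : En n, y ∈ Metric.closedBall (xbar S) δ₂ →
      y ∈ Metric.closedBall (xbar s) δbar := by
    intro y hy
    have hd := hωs S ⟨le_rfl, hST.le⟩ s hsIcc (by rw [abs_of_nonpos (by linarith)]; linarith)
    rw [mem_closedBall] at hy ⊢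
    calc dist y (xbar s) ≤ dist y (xbar S) + dist (xbar S) (xbar s) := dist_triangle _ _ _
    _ ≤ δ₂ + (δbar - δ₂) := add_le_add hy (by rw [dist_eq_norm]; exact hd)
    _ = δbar := by ring
  have h1 := (happrox s hSs hss₀ x hx1 a ha).2
  have h2 := (happrox s hSs hss₀ x' hx2 a ha).2
  have h3 : EMetric.hausdorffEdist (F s x a) (F s x' a) ≤ ENNReal.ofReal θ :=
    gamma_bound hγsub hθ hγρ hsIcc (hball x hx1) (hball x' hx2) ha hxx'
  have h4 : (8 : ℝ≥0∞) * θ₁ = (ϑ : ℝ≥0∞) := ENNReal.mul_div_cancel' (by norm_num) (by norm_num)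
  calc EMetric.hausdorffEdist (rightLim F T S x a) (rightLim F T S x' a)
      ≤ EMetric.hausdorffEdist (rightLim F T S x a) (F s x a)
        + EMetric.hausdorffEdist (F s x a) (rightLim F T S x' a) :=
        EMetric.hausdorffEdist_triangle
  _ ≤ EMetric.hausdorffEdist (rightLim F T S x a) (F s x a)
        + (EMetric.hausdorffEdist (F s x a) (F s x' a)
          + EMetric.hausdorffEdist (F s x' a) (rightLim F T S x' a)) :=
        add_le_add_right EMetric.hausdorffEdist_triangle _
  _ ≤ 4 * θ₁ + (ENNReal.ofReal θ + 4 * θ₁) := by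
        refine add_le_add ?_ (add_le_add h3 h2)
        rw [EMetric.hausdorffEdist, EMetric.hausdorffEdist_comm]
        exact h1
  _ = ENNReal.ofReal θ + 8 * θ₁ := by ring
  _ = ENNReal.ofReal θ + (ϑ : ℝ≥0∞) := by rw [h4]

lemma FS_cont {S T δbar ε₀ : ℝ} (hST : S < T) (hε₀ : 0 < ε₀)
    (hx : ContinuousOn xbar (Set.Icc S T))
    (hgtop : mvEtaEps F xbar A δbar ε₀ S T ≠ ⊤)
    (hne : ∀ t ∈ Set.Icc S T, ∀ x : En n, ∀ a ∈ A, (F t x a).Nonempty)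
    {γ : ℝ → ℝ}
    (hγsub : ∀ t ∈ Set.Icc S T, ∀ x ∈ Metric.closedBall (xbar t) δbar,
      ∀ x' ∈ Metric.closedBall (xbar t) δbar, ∀ a ∈ A, ∀ a' ∈ A,
        F t x a ⊆ F t x' a' + Metric.closedBall (0 : En n) (γ (‖x - x'‖ + ‖a - a'‖)))
    {θ ρ : ℝ} (hθ : 0 ≤ θ) (hγρ : ∀ d, 0 < d → d ≤ ρ → γ d ≤ θ)
    {δ δ₂ : ℝ} (hδ : 0 ≤ δ) (hδδ₂ : δ ≤ δ₂) (hδ₂b : δ₂ < δbar)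
    {x x' : En n} (hx1 : x ∈ Metric.closedBall (xbar S) δ₂)
    (hx2 : x' ∈ Metric.closedBall (xbar S) δ)
    {a : En k} (ha : a ∈ A) (hxx' : ‖x - x'‖ ≤ ρ) :
    EMetric.hausdorffEdist (F S x a) (rightLim F T S x a)
      ≤ (⨆ y ∈ Metric.closedBall (xbar S) δ, ⨆ b ∈ A,
          EMetric.hausdorffEdist (F S y b) (rightLim F T S y b))
        + (ENNReal.ofReal θ + ENNReal.ofReal θ) := by
  have hδ₂0 : (0:ℝ) ≤ δ₂ := le_trans hδ hδδ₂
  have hx2' : x' ∈ Metric.closedBall (xbar S) δ₂ :=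
    Metric.closedBall_subset_closedBall hδδ₂ hx2
  have hSIcc : S ∈ Set.Icc S T := ⟨le_rfl, hST.le⟩
  have h1 : EMetric.hausdorffEdist (F S x a) (F S x' a) ≤ ENNReal.ofReal θ :=
    gamma_bound hγsub hθ hγρ hSIcc
      (Metric.closedBall_subset_closedBall hδ₂b.le hx1)
      (Metric.closedBall_subset_closedBall (le_of_lt (lt_of_le_of_lt hδδ₂ hδ₂b)) hx2)
      ha hxx'
  have h2 : EMetric.hausdorffEdist (F S x' a) (rightLim F T S x' a)
      ≤ ⨆ y ∈ Metric.closedBall (xbar S) δ, ⨆ b ∈ A,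
          EMetric.hausdorffEdist (F S y b) (rightLim F T S y b) := by
    refine le_trans ?_ (le_iSup₂ (f := fun y _ => ⨆ b ∈ A,
      EMetric.hausdorffEdist (F S y b) (rightLim F T S y b)) x' hx2)
    exact le_iSup₂ (f := fun b _ =>
      EMetric.hausdorffEdist (F S x' b) (rightLim F T S x' b)) a ha
  have h3 : EMetric.hausdorffEdist (rightLim F T S x' a) (rightLim F T S x a)
      ≤ ENNReal.ofReal θ := by
    refine rightLim_gamma hST hε₀ hx hgtop hne hγsub hθ hγρ hδ₂0 hδ₂b hx2' hx1 ha ?_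
    rw [norm_sub_rev]
    exact hxx'
  calc EMetric.hausdorffEdist (F S x a) (rightLim F T S x a)
      ≤ EMetric.hausdorffEdist (F S x a) (F S x' a)
        + EMetric.hausdorffEdist (F S x' a) (rightLim F T S x a) :=
        EMetric.hausdorffEdist_triangle
  _ ≤ EMetric.hausdorffEdist (F S x a) (F S x' a)
        + (EMetric.hausdorffEdist (F S x' a) (rightLim F T S x' a)
          + EMetric.hausdorffEdist (rightLim F T S x' a) (rightLim F T S x a)) :=
        add_le_add_right EMetric.hausdorffEdist_triangle _
  _ ≤ ENNReal.ofReal θ + ((⨆ y ∈ Metric.closedBall (xbar S) δ, ⨆ b ∈ A,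
          EMetric.hausdorffEdist (F S y b) (rightLim F T S y b)) + ENNReal.ofReal θ) :=
        add_le_add h1 (add_le_add h2 h3)
  _ = (⨆ y ∈ Metric.closedBall (xbar S) δ, ⨆ b ∈ A,
          EMetric.hausdorffEdist (F S y b) (rightLim F T S y b))
        + (ENNReal.ofReal θ + ENNReal.ofReal θ) := by ring

lemma J_mono {S T : ℝ} {δ δ' : ℝ} (h : δ ≤ δ') :
    (⨆ y ∈ Metric.closedBall (xbar S) δ, ⨆ b ∈ A,
        EMetric.hausdorffEdist (F S y b) (rightLim F T S y b))
      ≤ ⨆ y ∈ Metric.closedBall (xbar S) δ', ⨆ b ∈ A,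
          EMetric.hausdorffEdist (F S y b) (rightLim F T S y b) := by
  refine iSup₂_le fun y hy => ?_
  exact le_iSup₂ (f := fun y _ => ⨆ b ∈ A,
    EMetric.hausdorffEdist (F S y b) (rightLim F T S y b)) y
    (Metric.closedBall_subset_closedBall h hy)

lemma J_ne_top {S T δbar ε₀ c : ℝ} (hST : S < T) (hε₀ : 0 < ε₀)
    (hx : ContinuousOn xbar (Set.Icc S T))
    (hgtop : mvEtaEps F xbar A δbar ε₀ S T ≠ ⊤)
    (hne : ∀ t ∈ Set.Icc S T, ∀ x : En n, ∀ a ∈ A, (F t x a).Nonempty)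
    (hbd : ∀ t ∈ Set.Icc S T, ∀ x ∈ Metric.closedBall (xbar t) δbar, ∀ a ∈ A,
      F t x a ⊆ Metric.closedBall (0 : En n) c)
    {δ : ℝ} (hδ : 0 ≤ δ) (hδb : δ < δbar) :
    (⨆ y ∈ Metric.closedBall (xbar S) δ, ⨆ b ∈ A,
        EMetric.hausdorffEdist (F S y b) (rightLim F T S y b)) ≠ ⊤ := by
  obtain ⟨s₀, hSs₀, hs₀T, happrox⟩ :=
    right_limit_approx hST hε₀ hx hgtop hne hδ hδb (θ₁ := 1) one_pos ENNReal.one_ne_top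
  obtain ⟨ω, hω, hωs⟩ := xbar_unif hx (show (0:ℝ) < δbar - δ by linarith)
  set s := min s₀ (S + ω) with hsdef
  have hSs : S < s := lt_min hSs₀ (by linarith)
  have hss₀ : s ≤ s₀ := min_le_left _ _
  have hsω : s ≤ S + ω := min_le_right _ _
  have hsIcc : s ∈ Set.Icc S T := ⟨hSs.le, by nlinarith [min_le_left s₀ (S + ω)]⟩
  have hbound : (⨆ y ∈ Metric.closedBall (xbar S) δ, ⨆ b ∈ A,
      EMetric.hausdorffEdist (F S y b) (rightLim F T S y b))
      ≤ ENNReal.ofReal (2 * c) + 4 * 1 := by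
    refine iSup₂_le fun y hy => iSup₂_le fun b hb => ?_
    have hyS : y ∈ Metric.closedBall (xbar S) δbar :=
      Metric.closedBall_subset_closedBall hδb.le hy
    have hys : y ∈ Metric.closedBall (xbar s) δbar := by
      have hd := hωs S ⟨le_rfl, hST.le⟩ s hsIcc (by rw [abs_of_nonpos (by linarith)]; linarith)
      rw [mem_closedBall] at hy ⊢
      calc dist y (xbar s) ≤ dist y (xbar S) + dist (xbar S) (xbar s) := dist_triangle _ _ _
      _ ≤ δ + (δbar - δ) := add_le_add hy (by rw [dist_eq_norm]; exact hd)
      _ = δbar := by ring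
    calc EMetric.hausdorffEdist (F S y b) (rightLim F T S y b)
        ≤ EMetric.hausdorffEdist (F S y b) (F s y b)
          + EMetric.hausdorffEdist (F s y b) (rightLim F T S y b) :=
          EMetric.hausdorffEdist_triangle
    _ ≤ ENNReal.ofReal (2 * c) + 4 * 1 :=
        add_le_add (hC1_bounded hne hbd ⟨le_rfl, hST.le⟩ hsIcc hyS hys hb)
          ((happrox s hSs hss₀ y hy b hb).2)
  refine (lt_of_le_of_lt hbound ?_).ne
  exact ENNReal.add_lt_top.2 ⟨ENNReal.ofReal_lt_top, by norm_num⟩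

lemma mvEtaDelta_ne_top {S T δbar ε₀ : ℝ} (hε₀ : 0 < ε₀)
    (hgtop : mvEtaEps F xbar A δbar ε₀ S T ≠ ⊤)
    {δ t : ℝ} (hδ : 0 ≤ δ) (hδb : δ ≤ δbar) (hSt : S < t) (htT : t ≤ T) :
    mvEtaDelta F xbar A δ S t ≠ ⊤ := by
  refine ne_top_of_le_ne_top hgtop ?_
  calc mvEtaDelta F xbar A δ S t ≤ mvEtaEps F xbar A δ ε₀ S t :=
      mvEtaDelta_le_mvEtaEps hε₀
  _ ≤ mvEtaEps F xbar A δbar ε₀ S t := mvEtaEps_mono_delta hδb hδ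
  _ ≤ mvEtaEps F xbar A δbar ε₀ S T := mvEtaEps_mono_t hSt htT hε₀

lemma mvEta_restrict {G : ℝ → En n → En k → Set (En n)} {S t β : ℝ} (hβ : 0 < β) :
    mvEta G xbar A S t
      = ⨅ d : {d : ℝ // 0 < d ∧ d ≤ β}, mvEtaDelta G xbar A d.1 S t := by
  refine le_antisymm (le_iInf fun d => iInf₂_le d.1 d.2.1) ?_
  refine le_iInf fun δ' => le_iInf fun hδ' => ?_
  refine iInf_le_of_le ⟨min δ' β, lt_min hδ' hβ, min_le_right _ _⟩ ?_
  exact mvEtaDelta_mono_delta (F := G) (min_le_left _ _) (le_of_lt (lt_min hδ' hβ))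
lemma err8 (ϑ : NNReal) {m : ℝ} (hm : 0 ≤ m) (hm8 : m ≤ 8) :
    ENNReal.ofReal m * ENNReal.ofReal ((ϑ:ℝ)/8) ≤ (ϑ : ℝ≥0∞) := by
  calc ENNReal.ofReal m * ENNReal.ofReal ((ϑ:ℝ)/8) = ENNReal.ofReal (m * ((ϑ:ℝ)/8)) :=
      (ENNReal.ofReal_mul hm).symm
  _ ≤ ENNReal.ofReal (ϑ:ℝ) := ENNReal.ofReal_le_ofReal (by nlinarith [ϑ.coe_nonneg])
  _ = (ϑ:ℝ≥0∞) := ENNReal.ofReal_coe_nnreal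

lemma main_identity {S T δbar ε₀ : ℝ} (hST : S < T) (hε₀ : 0 < ε₀)
    (hx : ContinuousOn xbar (Set.Icc S T))
    (hgtop : mvEtaEps F xbar A δbar ε₀ S T ≠ ⊤)
    (hne : ∀ t ∈ Set.Icc S T, ∀ x : En n, ∀ a ∈ A, (F t x a).Nonempty)
    {γ : ℝ → ℝ} (hγten : Tendsto γ (𝓝[>] (0:ℝ)) (𝓝 0))
    (hγsub : ∀ t ∈ Set.Icc S T, ∀ x ∈ Metric.closedBall (xbar t) δbar,
      ∀ x' ∈ Metric.closedBall (xbar t) δbar, ∀ a ∈ A, ∀ a' ∈ A,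
        F t x a ⊆ F t x' a' + Metric.closedBall (0 : En n) (γ (‖x - x'‖ + ‖a - a'‖)))
    {δ t : ℝ} (hδ : 0 ≤ δ) (hδb : δ < δbar) (htIoo : t ∈ Set.Ioo S T) :
    mvEtaDelta (Ftilde F xbar S T δbar) xbar A δ S t
      + (⨆ y ∈ Metric.closedBall (xbar S) δ, ⨆ b ∈ A,
          EMetric.hausdorffEdist (F S y b) (rightLim F T S y b))
      = mvEtaDelta F xbar A δ S t := by
  obtain ⟨hSt, htT⟩ := htIoo
  set Ft := Ftilde F xbar S T δbar with hFtdef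
  set J : ℝ≥0∞ := ⨆ y ∈ Metric.closedBall (xbar S) δ, ⨆ b ∈ A,
      EMetric.hausdorffEdist (F S y b) (rightLim F T S y b) with hJdef
  set δ₂ : ℝ := δ + (δbar - δ) / 2 with hδ₂def
  have hδ₂0 : 0 ≤ δ₂ := by simp only [hδ₂def]; linarith
  have hδδ₂ : δ ≤ δ₂ := by simp only [hδ₂def]; linarith
  have hδ₂b : δ₂ < δbar := by simp only [hδ₂def]; linarith
  -- tail terms of any partition of [S,t] agree for F and Ft
  have htail : ∀ (P : MvPartition S t) (i : ℕ), i < P.N - 1 →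
      Eterm Ft xbar A δ (P.pts (i + 1)) (P.pts (i + 2))
        = Eterm F xbar A δ (P.pts (i + 1)) (P.pts (i + 2)) := by
    intro P i hi
    have h1 : ∀ j, 1 ≤ j → j ≤ P.N → S < P.pts j ∧ P.pts j < T := by
      intro j hj1 hjN
      constructor
      · exact lt_of_lt_of_le P.S_lt_pts1 (P.pts_le hj1 hjN)
      · exact lt_of_le_of_lt (P.pts_le_t hjN) htT
    have e1 := h1 (i + 1) (by omega) (by omega)
    have e2 := h1 (i + 2) (by omega) (by omega)
    exact Eterm_congr (fun x a => Ftilde_interior e1.1.ne' e1.2.ne x a)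
      (fun x a => Ftilde_interior e2.1.ne' e2.2.ne x a)
  refine le_antisymm ?_ ?_
  · -- Direction B : η̃ + J ≤ η
    refine le_mvEtaDelta fun ε hε => ?_
    refine ENNReal.le_of_forall_pos_le_add fun ϑ hϑ _ => ?_
    set θ : ℝ := (ϑ:ℝ)/8 with hθdef
    have hθpos : 0 < θ := by
      have := hϑ
      simp only [hθdef]
      positivity
    obtain ⟨ρ, hρ, hγρ⟩ := gamma_small hγten hθpos
    set ρ2 : ℝ := min ρ ((δbar - δ) / 2) with hρ2def
    have hρ2pos : 0 < ρ2 := lt_min hρ (by linarith)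
    obtain ⟨ω, hω, hωs⟩ := xbar_unif hx hρ2pos
    set θ₁ : ℝ≥0∞ := ENNReal.ofReal θ / 4 with hθ₁def
    have hθ₁pos : 0 < θ₁ :=
      ENNReal.div_pos (ENNReal.ofReal_pos.2 hθpos).ne' (by norm_num)
    have hθ₁top : θ₁ ≠ ⊤ := (ENNReal.div_lt_top ENNReal.ofReal_ne_top (by norm_num)).ne
    have h4θ₁ : 4 * θ₁ = ENNReal.ofReal θ :=
      ENNReal.mul_div_cancel' (by norm_num) (by norm_num)
    obtain ⟨s₀, hSs₀, hs₀T, happrox⟩ :=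
      right_limit_approx hST hε₀ hx hgtop hne hδ₂0 hδ₂b hθ₁pos hθ₁top
    set ε' : ℝ := min ε (min ω (min (s₀ - S) ((t - S) / 2))) with hε'def
    have hε'pos : 0 < ε' := lt_min hε (lt_min hω (lt_min (by linarith) (by linarith)))
    have hε'ε : ε' ≤ ε := min_le_left _ _
    have hε'ω : ε' ≤ ω := le_trans (min_le_right _ _) (min_le_left _ _)
    have hε's₀ : ε' ≤ s₀ - S :=
      le_trans (min_le_right _ _) (le_trans (min_le_right _ _) (min_le_left _ _))
    refine le_trans (add_le_add_left (mvEtaDelta_le_mvEtaEps (F := Ft) hε'pos) J) ?_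
    refine mvEtaEps_add_le hSt hε'pos fun P hP => ?_
    -- setup for this partition
    set t₁ : ℝ := P.pts 1 with ht₁def
    have ht₁S : S < t₁ := P.S_lt_pts1
    have ht₁ε' : t₁ - S ≤ ε' := by
      have := hP 0 P.hN
      rwa [P.first] at this
    have ht₁t : t₁ ≤ t := by
      have := P.pts_le_t (i := 1) P.hN
      exact this
    have ht₁T : t₁ < T := lt_of_le_of_lt ht₁t htT
    set s : ℝ := min ((S + t₁)/2) s₀ with hsdef
    have hSs : S < s := lt_min (by linarith) hSs₀
    have hst₁ : s < t₁ := lt_of_le_of_lt (min_le_left _ _) (by linarith)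
    have hss₀ : s ≤ s₀ := min_le_right _ _
    have hsIcc : s ∈ Set.Icc S T := ⟨hSs.le, by linarith [lt_of_lt_of_le hst₁ (le_trans ht₁t htT.le)]⟩
    have ht₁Icc : t₁ ∈ Set.Icc S T := ⟨ht₁S.le, le_trans ht₁t htT.le⟩
    -- norms of xbar differences on [S,t₁]
    have hxeps : ∀ u v : ℝ, u ∈ Set.Icc S t₁ → v ∈ Set.Icc S t₁ → ‖xbar u - xbar v‖ ≤ ρ2 := by
      intro u v hu hv
      refine hωs u ⟨hu.1, le_trans hu.2 ht₁Icc.2⟩ v ⟨hv.1, le_trans hv.2 ht₁Icc.2⟩ ?_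
      rw [abs_le]
      constructor <;> [linarith [hu.1, hv.2, ht₁ε', hε'ω]; linarith [hu.2, hv.1, ht₁ε', hε'ω]]
    -- the head estimate
    have hhead : Eterm Ft xbar A δ S t₁
        ≤ Eterm F xbar A δ s t₁ + (3 * ENNReal.ofReal θ) := by
      refine Eterm_le Ft xbar A fun x hxdom a ha => ?_
      obtain ⟨u, hu, hxu⟩ := (mem_dom_iff xbar).1 hxdom
      have hxS2 : x ∈ Metric.closedBall (xbar S) δ₂ := by
        rw [mem_closedBall, dist_eq_norm]
        calc ‖x - xbar S‖ ≤ ‖x - xbar u‖ + ‖xbar u - xbar S‖ := norm_sub_le_norm_sub_add_norm_sub _ _ _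
        _ ≤ δ + ρ2 := add_le_add hxu (hxeps u S hu ⟨le_rfl, ht₁S.le⟩)
        _ ≤ δ₂ := by simp only [hρ2def, hδ₂def]; have := min_le_right ρ ((δbar - δ)/2); linarith
      have hxδbar : ‖x - xbar S‖ < δbar := by
        have := mem_closedBall.1 hxS2
        rw [dist_eq_norm] at this
        linarith
      have hFt1 : ∀ y a', Ft t₁ y a' = F t₁ y a' :=
        fun y a' => Ftilde_interior ht₁S.ne' ht₁T.ne y a'
      have hFtS : Ft S x a = rightLim F T S x a := Ftilde_at_S hxδbar a
      rw [hFt1, hFtS]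
      have happx : EMetric.hausdorffEdist (F s x a) (rightLim F T S x a)
          ≤ ENNReal.ofReal θ := by
        rw [← h4θ₁]
        exact (happrox s hSs hss₀ x hxS2 a ha).2
      have hballs : x ∈ Metric.closedBall (xbar s) δbar := by
        rw [mem_closedBall, dist_eq_norm]
        calc ‖x - xbar s‖ ≤ ‖x - xbar u‖ + ‖xbar u - xbar s‖ := norm_sub_le_norm_sub_add_norm_sub _ _ _
        _ ≤ δ + ρ2 := add_le_add hxu (hxeps u s hu ⟨hSs.le, hst₁.le⟩)
        _ ≤ δbar := by simp only [hρ2def]; have := min_le_right ρ ((δbar - δ)/2); linarith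
      have hballt₁ : x ∈ Metric.closedBall (xbar t₁) δbar := by
        rw [mem_closedBall, dist_eq_norm]
        calc ‖x - xbar t₁‖ ≤ ‖x - xbar u‖ + ‖xbar u - xbar t₁‖ := norm_sub_le_norm_sub_add_norm_sub _ _ _
        _ ≤ δ + ρ2 := add_le_add hxu (hxeps u t₁ hu ⟨ht₁S.le, le_rfl⟩)
        _ ≤ δbar := by simp only [hρ2def]; have := min_le_right ρ ((δbar - δ)/2); linarith
      by_cases hcase : s ≤ u
      · have hxdom' : x ∈ xbar '' Set.Icc s t₁ + Metric.closedBall (0 : En n) δ :=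
          (mem_dom_iff xbar).2 ⟨u, ⟨hcase, hu.2⟩, hxu⟩
        calc EMetric.hausdorffEdist (F t₁ x a) (rightLim F T S x a)
            ≤ EMetric.hausdorffEdist (F t₁ x a) (F s x a)
              + EMetric.hausdorffEdist (F s x a) (rightLim F T S x a) :=
              EMetric.hausdorffEdist_triangle
        _ ≤ Eterm F xbar A δ s t₁ + ENNReal.ofReal θ :=
            add_le_add (le_Eterm F xbar A hxdom' ha) happx
        _ ≤ Eterm F xbar A δ s t₁ + 3 * ENNReal.ofReal θ := by
            refine add_le_add_right ?_ _
            calc ENNReal.ofReal θ = 1 * ENNReal.ofReal θ := (one_mul _).symm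
            _ ≤ 3 * ENNReal.ofReal θ := mul_le_mul_left (by norm_num) _
      · push_neg at hcase
        set x' : En n := xbar s + (x - xbar u) with hx'def
        have hx'dom : x' ∈ xbar '' Set.Icc s t₁ + Metric.closedBall (0 : En n) δ := by
          refine (mem_dom_iff xbar).2 ⟨s, ⟨le_rfl, hst₁.le⟩, ?_⟩
          have : x' - xbar s = x - xbar u := by simp [hx'def]
          rw [this]
          exact hxu
        have hxx' : ‖x - x'‖ ≤ ρ2 := by
          have : x - x' = xbar u - xbar s := by simp [hx'def]; abel
          rw [this]
          exact hxeps u s hu ⟨hSs.le, hst₁.le⟩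
        have hρ2ρ : ρ2 ≤ ρ := min_le_left _ _
        have hx'balls : x' ∈ Metric.closedBall (xbar s) δbar := by
          rw [mem_closedBall, dist_eq_norm]
          have : x' - xbar s = x - xbar u := by simp [hx'def]
          rw [this]
          exact le_trans hxu (by linarith)
        have hx'ballt₁ : x' ∈ Metric.closedBall (xbar t₁) δbar := by
          rw [mem_closedBall, dist_eq_norm]
          have : x' - xbar t₁ = (x - xbar u) + (xbar s - xbar t₁) := by simp [hx'def]; abel
          rw [this]
          calc ‖(x - xbar u) + (xbar s - xbar t₁)‖ ≤ ‖x - xbar u‖ + ‖xbar s - xbar t₁‖ :=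
              norm_add_le _ _
          _ ≤ δ + ρ2 := add_le_add hxu (hxeps s t₁ ⟨hSs.le, hst₁.le⟩ ⟨ht₁S.le, le_rfl⟩)
          _ ≤ δbar := by simp only [hρ2def]; have := min_le_right ρ ((δbar - δ)/2); linarith
        have hg1 : EMetric.hausdorffEdist (F t₁ x a) (F t₁ x' a) ≤ ENNReal.ofReal θ :=
          gamma_bound hγsub hθpos.le hγρ ht₁Icc hballt₁ hx'ballt₁ ha (le_trans hxx' hρ2ρ)
        have hg2 : EMetric.hausdorffEdist (F s x' a) (F s x a) ≤ ENNReal.ofReal θ := by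
          refine gamma_bound hγsub hθpos.le hγρ hsIcc hx'balls hballs ha ?_
          rw [norm_sub_rev]
          exact le_trans hxx' hρ2ρ
        calc EMetric.hausdorffEdist (F t₁ x a) (rightLim F T S x a)
            ≤ EMetric.hausdorffEdist (F t₁ x a) (F t₁ x' a)
              + EMetric.hausdorffEdist (F t₁ x' a) (rightLim F T S x a) :=
              EMetric.hausdorffEdist_triangle
        _ ≤ EMetric.hausdorffEdist (F t₁ x a) (F t₁ x' a)
              + (EMetric.hausdorffEdist (F t₁ x' a) (F s x' a)
                + EMetric.hausdorffEdist (F s x' a) (rightLim F T S x a)) :=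
              add_le_add_right EMetric.hausdorffEdist_triangle _
        _ ≤ EMetric.hausdorffEdist (F t₁ x a) (F t₁ x' a)
              + (EMetric.hausdorffEdist (F t₁ x' a) (F s x' a)
                + (EMetric.hausdorffEdist (F s x' a) (F s x a)
                  + EMetric.hausdorffEdist (F s x a) (rightLim F T S x a))) := by
              refine add_le_add_right (add_le_add_right EMetric.hausdorffEdist_triangle _) _
        _ ≤ ENNReal.ofReal θ + (Eterm F xbar A δ s t₁ + (ENNReal.ofReal θ + ENNReal.ofReal θ)) := by
              refine add_le_add hg1 (add_le_add (le_Eterm F xbar A hx'dom ha) (add_le_add hg2 happx))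
        _ = Eterm F xbar A δ s t₁ + 3 * ENNReal.ofReal θ := by ring
    -- J is controlled by the new first interval
    have hJle : J ≤ Eterm F xbar A δ S s + ENNReal.ofReal θ := by
      refine iSup₂_le fun y hy => iSup₂_le fun b hb => ?_
      have hydom : y ∈ xbar '' Set.Icc S s + Metric.closedBall (0 : En n) δ := by
        refine (mem_dom_iff xbar).2 ⟨S, ⟨le_rfl, hSs.le⟩, ?_⟩
        have := mem_closedBall.1 hy
        rwa [dist_eq_norm] at this
      have hy₂ : y ∈ Metric.closedBall (xbar S) δ₂ :=
        Metric.closedBall_subset_closedBall hδδ₂ hy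
      calc EMetric.hausdorffEdist (F S y b) (rightLim F T S y b)
          ≤ EMetric.hausdorffEdist (F S y b) (F s y b)
            + EMetric.hausdorffEdist (F s y b) (rightLim F T S y b) :=
            EMetric.hausdorffEdist_triangle
      _ ≤ Eterm F xbar A δ S s + ENNReal.ofReal θ := by
          refine add_le_add ?_ ?_
          · rw [EMetric.hausdorffEdist, EMetric.hausdorffEdist_comm]
            exact le_Eterm F xbar A hydom hb
          · rw [← h4θ₁]
            exact (happrox s hSs hss₀ y hy₂ b hb).2
    -- assemble via the refined partition
    have hup : Eterm F xbar A δ S s + Eterm F xbar A δ s t₁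
        + ∑ i ∈ Finset.range (P.N - 1), Eterm F xbar A δ (P.pts (i + 1)) (P.pts (i + 2))
        ≤ mvEtaEps F xbar A δ ε S t := by
      have hd := le_mvEtaEps (F := F) (xbar := xbar) (A := A) (δ := δ)
        (P.insertFront s hSs hst₁)
        (MvPartition.insertFront_diamLE hSs hst₁ hP hε'ε ht₁ε')
      rwa [insertFront_sum] at hd
    have herr : (4 : ℝ≥0∞) * ENNReal.ofReal θ ≤ (ϑ : ℝ≥0∞) := by
      rw [show (4:ℝ≥0∞) = ENNReal.ofReal 4 by rw [ENNReal.ofReal_ofNat], hθdef]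
      exact err8 ϑ (by norm_num) (by norm_num)
    calc mvSum Ft xbar A δ P + J
        = Eterm Ft xbar A δ S t₁
          + ∑ i ∈ Finset.range (P.N - 1), Eterm Ft xbar A δ (P.pts (i + 1)) (P.pts (i + 2))
          + J := by rw [head_tail]
    _ = Eterm Ft xbar A δ S t₁
          + ∑ i ∈ Finset.range (P.N - 1), Eterm F xbar A δ (P.pts (i + 1)) (P.pts (i + 2))
          + J := by
          rw [Finset.sum_congr rfl fun i hi => htail P i (Finset.mem_range.1 hi)]
    _ ≤ (Eterm F xbar A δ s t₁ + 3 * ENNReal.ofReal θ)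
          + ∑ i ∈ Finset.range (P.N - 1), Eterm F xbar A δ (P.pts (i + 1)) (P.pts (i + 2))
          + (Eterm F xbar A δ S s + ENNReal.ofReal θ) :=
          add_le_add (add_le_add_left hhead _) hJle
    _ = (Eterm F xbar A δ S s + Eterm F xbar A δ s t₁
          + ∑ i ∈ Finset.range (P.N - 1), Eterm F xbar A δ (P.pts (i + 1)) (P.pts (i + 2)))
          + 4 * ENNReal.ofReal θ := by ring
    _ ≤ mvEtaEps F xbar A δ ε S t + (ϑ : ℝ≥0∞) := add_le_add hup herr
  · -- Direction A : η ≤ η̃ + J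
    refine ENNReal.le_of_forall_pos_le_add fun ϑ hϑ _ => ?_
    rw [add_assoc]
    refine le_mvEtaDelta_add fun ε hε => ?_
    set θ : ℝ := (ϑ:ℝ)/8 with hθdef
    have hθpos : 0 < θ := by
      simp only [hθdef]
      positivity
    obtain ⟨ρ, hρ, hγρ⟩ := gamma_small hγten hθpos
    set ρ2 : ℝ := min ρ ((δbar - δ) / 2) with hρ2def
    have hρ2pos : 0 < ρ2 := lt_min hρ (by linarith)
    obtain ⟨ω, hω, hωs⟩ := xbar_unif hx hρ2pos
    set ε' : ℝ := min ε (min ω ((t - S) / 2)) with hε'def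
    have hε'pos : 0 < ε' := lt_min hε (lt_min hω (by linarith))
    have hε'ε : ε' ≤ ε := min_le_left _ _
    have hε'ω : ε' ≤ ω := le_trans (min_le_right _ _) (min_le_left _ _)
    have herr : (2 : ℝ≥0∞) * ENNReal.ofReal θ ≤ (ϑ : ℝ≥0∞) := by
      rw [show (2:ℝ≥0∞) = ENNReal.ofReal 2 by rw [ENNReal.ofReal_ofNat], hθdef]
      exact err8 ϑ (by norm_num) (by norm_num)
    have hper : ∀ P : MvPartition S t, P.diamLE ε' →
        mvSum F xbar A δ P ≤ mvSum Ft xbar A δ P + (J + ϑ) := by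
      intro P hP
      set t₁ : ℝ := P.pts 1 with ht₁def
      have ht₁S : S < t₁ := P.S_lt_pts1
      have ht₁ε' : t₁ - S ≤ ε' := by
        have := hP 0 P.hN
        rwa [P.first] at this
      have ht₁t : t₁ ≤ t := P.pts_le_t (i := 1) P.hN
      have ht₁T : t₁ < T := lt_of_le_of_lt ht₁t htT
      have ht₁Icc : t₁ ∈ Set.Icc S T := ⟨ht₁S.le, le_trans ht₁t htT.le⟩
      have hxeps : ∀ u v : ℝ, u ∈ Set.Icc S t₁ → v ∈ Set.Icc S t₁ →
          ‖xbar u - xbar v‖ ≤ ρ2 := by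
        intro u v hu hv
        refine hωs u ⟨hu.1, le_trans hu.2 ht₁Icc.2⟩ v ⟨hv.1, le_trans hv.2 ht₁Icc.2⟩ ?_
        rw [abs_le]
        constructor <;> [linarith [hu.1, hv.2, ht₁ε', hε'ω]; linarith [hu.2, hv.1, ht₁ε', hε'ω]]
      have hhead : Eterm F xbar A δ S t₁
          ≤ Eterm Ft xbar A δ S t₁ + (J + 2 * ENNReal.ofReal θ) := by
        refine Eterm_le F xbar A fun x hxdom a ha => ?_
        obtain ⟨u, hu, hxu⟩ := (mem_dom_iff xbar).1 hxdom
        have hxS2 : x ∈ Metric.closedBall (xbar S) δ₂ := by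
          rw [mem_closedBall, dist_eq_norm]
          calc ‖x - xbar S‖ ≤ ‖x - xbar u‖ + ‖xbar u - xbar S‖ :=
              norm_sub_le_norm_sub_add_norm_sub _ _ _
          _ ≤ δ + ρ2 := add_le_add hxu (hxeps u S hu ⟨le_rfl, ht₁S.le⟩)
          _ ≤ δ₂ := by simp only [hρ2def, hδ₂def]; have := min_le_right ρ ((δbar - δ)/2); linarith
        have hxδbar : ‖x - xbar S‖ < δbar := by
          have := mem_closedBall.1 hxS2
          rw [dist_eq_norm] at this
          linarith
        have hFt1 : Ft t₁ x a = F t₁ x a := Ftilde_interior ht₁S.ne' ht₁T.ne x a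
        have hFtS : Ft S x a = rightLim F T S x a := Ftilde_at_S hxδbar a
        set x' : En n := xbar S + (x - xbar u) with hx'def
        have hx'ball : x' ∈ Metric.closedBall (xbar S) δ := by
          rw [mem_closedBall, dist_eq_norm]
          have : x' - xbar S = x - xbar u := by simp [hx'def]
          rw [this]
          exact hxu
        have hxx' : ‖x - x'‖ ≤ ρ := by
          have : x - x' = xbar u - xbar S := by simp [hx'def]; abel
          rw [this]
          exact le_trans (hxeps u S hu ⟨le_rfl, ht₁S.le⟩) (min_le_left _ _)
        have hFS : EMetric.hausdorffEdist (F S x a) (rightLim F T S x a)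
            ≤ J + (ENNReal.ofReal θ + ENNReal.ofReal θ) :=
          FS_cont hST hε₀ hx hgtop hne hγsub hθpos.le hγρ hδ hδδ₂ hδ₂b hxS2 hx'ball ha hxx'
        have hEt : EMetric.hausdorffEdist (F t₁ x a) (rightLim F T S x a)
            ≤ Eterm Ft xbar A δ S t₁ := by
          have := le_Eterm Ft xbar A (s := S) (s' := t₁) hxdom ha
          rwa [hFt1, hFtS] at this
        calc EMetric.hausdorffEdist (F t₁ x a) (F S x a)
            ≤ EMetric.hausdorffEdist (F t₁ x a) (rightLim F T S x a)
              + EMetric.hausdorffEdist (rightLim F T S x a) (F S x a) :=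
              EMetric.hausdorffEdist_triangle
        _ ≤ Eterm Ft xbar A δ S t₁ + (J + (ENNReal.ofReal θ + ENNReal.ofReal θ)) := by
            refine add_le_add hEt ?_
            rw [EMetric.hausdorffEdist, EMetric.hausdorffEdist_comm]
            exact hFS
        _ = Eterm Ft xbar A δ S t₁ + (J + 2 * ENNReal.ofReal θ) := by ring
      calc mvSum F xbar A δ P
          = Eterm F xbar A δ S t₁
            + ∑ i ∈ Finset.range (P.N - 1), Eterm F xbar A δ (P.pts (i + 1)) (P.pts (i + 2)) :=
            head_tail F P
      _ ≤ (Eterm Ft xbar A δ S t₁ + (J + 2 * ENNReal.ofReal θ))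
            + ∑ i ∈ Finset.range (P.N - 1), Eterm F xbar A δ (P.pts (i + 1)) (P.pts (i + 2)) :=
            add_le_add_left hhead _
      _ = (Eterm Ft xbar A δ S t₁
            + ∑ i ∈ Finset.range (P.N - 1), Eterm Ft xbar A δ (P.pts (i + 1)) (P.pts (i + 2)))
            + (J + 2 * ENNReal.ofReal θ) := by
            rw [Finset.sum_congr rfl fun i hi => htail P i (Finset.mem_range.1 hi)]
            ring
      _ = mvSum Ft xbar A δ P + (J + 2 * ENNReal.ofReal θ) := by rw [head_tail Ft P]
      _ ≤ mvSum Ft xbar A δ P + (J + ϑ) :=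
            add_le_add_right (add_le_add_right herr J) _
    calc mvEtaDelta F xbar A δ S t ≤ mvEtaEps F xbar A δ ε' S t :=
        mvEtaDelta_le_mvEtaEps hε'pos
    _ ≤ mvEtaEps Ft xbar A δ ε' S t + (J + ϑ) := by
        refine mvEtaEps_le fun P hP => ?_
        exact le_trans (hper P hP) (add_le_add_left (le_mvEtaEps P hP) _)
    _ ≤ mvEtaEps Ft xbar A δ ε S t + (J + ϑ) :=
        add_le_add_left (mvEtaEps_mono_eps hε'ε) _
lemma ennreal_add_sub_add (a b c : ℝ≥0∞) (hb : b ≠ ⊤) (hc : c ≠ ⊤) :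
    (a + c) - (b + c) = a - b := by
  rcases le_total a b with h | h
  · rw [tsub_eq_zero_of_le h, tsub_eq_zero_of_le (add_le_add_left h c)]
  · obtain ⟨d, rfl⟩ := exists_add_of_le h
    rw [ENNReal.add_sub_cancel_left hb,
      show b + d + c = (b + c) + d by ring,
      ENNReal.add_sub_cancel_left (ENNReal.add_ne_top.2 ⟨hb, hc⟩)]


/-- Under the stated hypotheses, for every `δ ∈ (0,δ̄)` (and also
for `δ = 0`, interpreting `η^0 = η`, `η̃^0 = η̃`) and every `t ∈ (S,T)`:
`η̃^δ(t) = η^δ(t) − sup{ d_H(F(S,x,a), F(S⁺,x,a)) : x ∈ x̄(S)+δ𝔹, a ∈ A }`;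
in particular `η̃^δ(t) − η̃^δ(s) = η^δ(t) − η^δ(s)` for every `[s,t] ⊂ (S,T)`. -/
theorem statement6 {n k : ℕ} (F : ℝ → En n → En k → Set (En n))
    (xbar : ℝ → En n) (A : Set (En k)) (S T : ℝ) (hST : S < T)
    (hA : IsCompact A) (hx : ContinuousOn xbar (Set.Icc S T))
    (hBV : HasBVAlongUniformly F xbar A S T)
    (δbar : ℝ) (hδbar : 0 < δbar) (hfin : mvEtaDelta F xbar A δbar S T < ⊤)
    (hC1 : HypC1 F xbar A S T δbar) (hC2 : HypC2 F xbar A S T δbar) :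
    ∀ δ ∈ Set.Ico 0 δbar,
      (∀ t ∈ Set.Ioo S T,
        mvEtaD (Ftilde F xbar S T δbar) xbar A δ S t =
          mvEtaD F xbar A δ S t -
            ⨆ x ∈ Metric.closedBall (xbar S) δ, ⨆ a ∈ A,
              EMetric.hausdorffEdist (F S x a) (rightLim F T S x a)) ∧
      ∀ s t : ℝ, S < s → s ≤ t → t < T →
        mvEtaD (Ftilde F xbar S T δbar) xbar A δ S t -
            mvEtaD (Ftilde F xbar S T δbar) xbar A δ S s =
          mvEtaD F xbar A δ S t - mvEtaD F xbar A δ S s := by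
  intro δ hδIco
  obtain ⟨hδ0, hδb⟩ := hδIco
  simp only [mvEtaDelta] at hfin
  obtain ⟨ε₀, hε₀'⟩ := iInf_lt_iff.1 hfin
  obtain ⟨hε₀pos, hε₀lt⟩ := iInf_lt_iff.1 hε₀'
  have hgtop : mvEtaEps F xbar A δbar ε₀ S T ≠ ⊤ := hε₀lt.ne
  obtain ⟨hC1a, hC1b, c, hc, hbd⟩ := hC1
  have hne : ∀ t ∈ Set.Icc S T, ∀ x : En n, ∀ a ∈ A, (F t x a).Nonempty :=
    fun t ht x a ha => (hC1a t ht x a ha).1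
  obtain ⟨γ, hγ0, hγten, hγsub⟩ := hC2
  set Ft := Ftilde F xbar S T δbar with hFtdef
  have hML : ∀ δ' t', 0 ≤ δ' → δ' < δbar → t' ∈ Set.Ioo S T →
      mvEtaDelta Ft xbar A δ' S t'
        + (⨆ y ∈ Metric.closedBall (xbar S) δ', ⨆ b ∈ A,
            EMetric.hausdorffEdist (F S y b) (rightLim F T S y b))
        = mvEtaDelta F xbar A δ' S t' :=
    fun δ' t' h1 h2 h3 => main_identity hST hε₀pos hx hgtop hne hγten hγsub h1 h2 h3
  have hJne : ∀ δ' : ℝ, 0 ≤ δ' → δ' < δbar →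
      (⨆ y ∈ Metric.closedBall (xbar S) δ', ⨆ b ∈ A,
          EMetric.hausdorffEdist (F S y b) (rightLim F T S y b)) ≠ ⊤ :=
    fun δ' h1 h2 => J_ne_top hST hε₀pos hx hgtop hne hbd h1 h2
  have hηne : ∀ δ' t', 0 ≤ δ' → δ' ≤ δbar → t' ∈ Set.Ioo S T →
      mvEtaDelta F xbar A δ' S t' ≠ ⊤ :=
    fun δ' t' h1 h2 h3 => mvEtaDelta_ne_top hε₀pos hgtop h1 h2 h3.1 h3.2.le
  have key : (∀ t' ∈ Set.Ioo S T,
      mvEtaD Ft xbar A δ S t'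
        + (⨆ y ∈ Metric.closedBall (xbar S) δ, ⨆ b ∈ A,
            EMetric.hausdorffEdist (F S y b) (rightLim F T S y b))
        = mvEtaD F xbar A δ S t')
      ∧ (⨆ y ∈ Metric.closedBall (xbar S) δ, ⨆ b ∈ A,
          EMetric.hausdorffEdist (F S y b) (rightLim F T S y b)) ≠ ⊤
      ∧ ∀ t' ∈ Set.Ioo S T, mvEtaD F xbar A δ S t' ≠ ⊤ := by
    by_cases hδ0' : δ = 0
    · subst hδ0'
      refine ⟨?_, hJne 0 le_rfl hδbar, ?_⟩
      · intro t' ht'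
        unfold mvEtaD
        rw [if_pos rfl, if_pos rfl]
        have hβpos : (0:ℝ) < δbar / 2 := by linarith
        refine le_antisymm ?_ ?_
        · rw [mvEta_restrict (G := F) (β := δbar / 2) hβpos]
          refine le_iInf fun d => ?_
          rw [← hML d.1 t' d.2.1.le (lt_of_le_of_lt d.2.2 (by linarith)) ht']
          exact add_le_add (iInf₂_le d.1 d.2.1) (J_mono d.2.1.le)
        · refine ENNReal.le_of_forall_pos_le_add fun ϑ hϑ _ => ?_
          set θ : ℝ := (ϑ:ℝ)/8 with hθdef
          have hθpos : 0 < θ := by simp only [hθdef]; positivity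
          obtain ⟨ρ, hρ, hγρ⟩ := gamma_small hγten hθpos
          set β : ℝ := min ρ (δbar / 2) with hβdef
          have hβpos' : 0 < β := lt_min hρ hβpos
          have herr2 : (2:ℝ≥0∞) * ENNReal.ofReal θ ≤ (ϑ : ℝ≥0∞) := by
            rw [show (2:ℝ≥0∞) = ENNReal.ofReal 2 by rw [ENNReal.ofReal_ofNat], hθdef]
            exact err8 ϑ (by norm_num) (by norm_num)
          have hJsmall : ∀ d : ℝ, 0 < d → d ≤ β →
              (⨆ y ∈ Metric.closedBall (xbar S) d, ⨆ b ∈ A,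
                  EMetric.hausdorffEdist (F S y b) (rightLim F T S y b))
                ≤ (⨆ y ∈ Metric.closedBall (xbar S) (0:ℝ), ⨆ b ∈ A,
                    EMetric.hausdorffEdist (F S y b) (rightLim F T S y b))
                  + 2 * ENNReal.ofReal θ := by
            intro d hd hdβ
            refine iSup₂_le fun y hy => iSup₂_le fun b hb => ?_
            have h := FS_cont hST hε₀pos hx hgtop hne hγsub hθpos.le hγρ
              (δ := 0) (δ₂ := δbar / 2) le_rfl hβpos.le (by linarith)
              (Metric.closedBall_subset_closedBall
                (le_trans hdβ (min_le_right _ _)) hy)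
              (Metric.mem_closedBall_self le_rfl) hb
              (by
                have := mem_closedBall.1 hy
                rw [dist_eq_norm] at this
                exact le_trans this (le_trans hdβ (min_le_left _ _)))
            rw [two_mul]
            exact h
          calc mvEta F xbar A S t'
              = ⨅ d : {d : ℝ // 0 < d ∧ d ≤ β}, mvEtaDelta F xbar A d.1 S t' :=
              mvEta_restrict hβpos'
          _ ≤ ⨅ d : {d : ℝ // 0 < d ∧ d ≤ β},
                (mvEtaDelta Ft xbar A d.1 S t'
                  + ((⨆ y ∈ Metric.closedBall (xbar S) (0:ℝ), ⨆ b ∈ A,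
                      EMetric.hausdorffEdist (F S y b) (rightLim F T S y b))
                    + 2 * ENNReal.ofReal θ)) := by
              refine iInf_mono fun d => ?_
              have hdb : d.1 < δbar :=
                lt_of_le_of_lt (le_trans d.2.2 (min_le_right _ _)) (by linarith)
              rw [← hML d.1 t' d.2.1.le hdb ht']
              exact add_le_add_right (hJsmall d.1 d.2.1 d.2.2) _
          _ = (⨅ d : {d : ℝ // 0 < d ∧ d ≤ β}, mvEtaDelta Ft xbar A d.1 S t')
                + ((⨆ y ∈ Metric.closedBall (xbar S) (0:ℝ), ⨆ b ∈ A,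
                    EMetric.hausdorffEdist (F S y b) (rightLim F T S y b))
                  + 2 * ENNReal.ofReal θ) := ENNReal.iInf_add.symm
          _ = mvEta Ft xbar A S t'
                + ((⨆ y ∈ Metric.closedBall (xbar S) (0:ℝ), ⨆ b ∈ A,
                    EMetric.hausdorffEdist (F S y b) (rightLim F T S y b))
                  + 2 * ENNReal.ofReal θ) := by
              rw [← mvEta_restrict (G := Ft) hβpos']
          _ ≤ mvEta Ft xbar A S t'
                + (⨆ y ∈ Metric.closedBall (xbar S) (0:ℝ), ⨆ b ∈ A,
                    EMetric.hausdorffEdist (F S y b) (rightLim F T S y b))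
                + (ϑ : ℝ≥0∞) := by
              rw [add_assoc]
              exact add_le_add_right (add_le_add_right herr2 _) _
      · intro t' ht'
        unfold mvEtaD
        rw [if_pos rfl]
        refine ne_top_of_le_ne_top (hηne (δbar / 2) t' (by linarith) (by linarith) ht') ?_
        exact iInf₂_le (δbar / 2) (by linarith)
    · refine ⟨fun t' ht' => ?_, hJne δ hδ0 hδb, fun t' ht' => ?_⟩
      · unfold mvEtaD
        rw [if_neg hδ0', if_neg hδ0']
        exact hML δ t' hδ0 hδb ht'
      · unfold mvEtaD
        rw [if_neg hδ0']
        exact hηne δ t' hδ0 hδb.le ht'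
  obtain ⟨hid, hJt, hfin'⟩ := key
  constructor
  · intro t ht
    rw [← hid t ht]
    exact (ENNReal.add_sub_cancel_right hJt).symm
  · intro s t hSs hst htT
    have hsIoo : s ∈ Set.Ioo S T := ⟨hSs, lt_of_le_of_lt hst htT⟩
    have htIoo : t ∈ Set.Ioo S T := ⟨lt_of_lt_of_le hSs hst, htT⟩
    have hbs : mvEtaD Ft xbar A δ S s ≠ ⊤ := by
      intro hcon
      exact hfin' s hsIoo (by rw [← hid s hsIoo, hcon, top_add])
    rw [← hid t htIoo, ← hid s hsIoo]
    exact (ennreal_add_sub_add _ _ _ hbs hJt).symm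

end
end

section
/- Consider the control system (S) with a control ū satisfying hypotheses (S1)–(S3) and (BV). For h ∈ ℝ let u^h be the shifted control u^h(t) = ū(S) if t−h < S, ū(t−h) if S ≤ t−h ≤ T, ū(T) if t−h > T, and let x^h be the solution of ẋ(t) = f(x(t),u^h(t)), x(S) = x₀ on [S,T]. Then: (i) for every h ≥ 0, ∫_[S,T] |f(x̄(t),u^h(t)) − f(x̄(t),ū(t))| dt ≤ 2 k₁ η_ū(T) h, where η_ū is the cumulative variation function of ū and x̄ = x⁰; and (ii) there exists a constant K₁, independent of h, such that ‖x^h − x̄‖_{L^∞} ≤ K₁ h for all h ≥ 0 sufficiently small. -/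
open Set Metric Filter MeasureTheory Pointwise
open scoped ENNReal Topology

noncomputable section

/-- A partition `{t₀ = S, t₁, …, t_N = t}` of the interval `[S, t]`. -/
structure TimePartition (S t : ℝ) where
  N : ℕ
  pts : ℕ → ℝ
  hN : 0 < N
  first : pts 0 = S
  last : pts N = t
  mono : ∀ i, i < N → pts i < pts (i + 1)

/-- `diam(𝒯) ≤ ε` : every subinterval of the partition has length at most `ε`. -/
def TimePartition.diamLE {S t : ℝ} (P : TimePartition S t) (ε : ℝ) : Prop :=
  ∀ i, i < P.N → P.pts (i + 1) - P.pts i ≤ ε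

/-- The sum `I^δ(𝒯) = Σᵢ sup { |m(tᵢ₊₁,x) − m(tᵢ,x)| : x ∈ x̄([tᵢ,tᵢ₊₁]) + δ𝔹 }`
for a function `m` along `x̄` (distances measured by `edist` in the target). -/
noncomputable def fSum {E α : Type*} [NormedAddCommGroup E] [PseudoEMetricSpace α]
    (m : ℝ → E → α) (xbar : ℝ → E) (δ : ℝ) {S t : ℝ} (P : TimePartition S t) : ℝ≥0∞ :=
  ∑ i ∈ Finset.range P.N,
    ⨆ x ∈ xbar '' Set.Icc (P.pts i) (P.pts (i + 1)) + Metric.closedBall (0 : E) δ,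
      edist (m (P.pts (i + 1)) x) (m (P.pts i) x)

/-- The `(δ,ε)`-perturbed cumulative variation function `η^δ_ε(t)` of `m(·,x)` along
`x̄`: the supremum of `I^δ(𝒯)` over partitions `𝒯` of `[S,t]` with `diam(𝒯) ≤ ε`. -/
noncomputable def fEtaEps {E α : Type*} [NormedAddCommGroup E] [PseudoEMetricSpace α]
    (m : ℝ → E → α) (xbar : ℝ → E) (δ ε : ℝ) (S t : ℝ) : ℝ≥0∞ :=
  ⨆ (P : TimePartition S t) (_ : P.diamLE ε), fSum m xbar δ P

/-- The `δ`-perturbed cumulative variation function `η^δ(t) = lim_{ε↓0} η^δ_ε(t)`. -/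
noncomputable def fEtaDelta {E α : Type*} [NormedAddCommGroup E] [PseudoEMetricSpace α]
    (m : ℝ → E → α) (xbar : ℝ → E) (δ : ℝ) (S t : ℝ) : ℝ≥0∞ :=
  ⨅ (ε : ℝ) (_ : 0 < ε), fEtaEps m xbar δ ε S t

/-- The cumulative variation function `η(t) = lim_{δ↓0} η^δ(t)` of `m(·,x)` along `x̄`. -/
noncomputable def fEta {E α : Type*} [NormedAddCommGroup E] [PseudoEMetricSpace α]
    (m : ℝ → E → α) (xbar : ℝ → E) (S t : ℝ) : ℝ≥0∞ :=
  ⨅ (δ : ℝ) (_ : 0 < δ), fEtaDelta m xbar δ S t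

/-- `m(·,x)` has bounded variation along `x̄` on `[S,T]` : `η(T) < ∞`. -/
def FunHasBVAlong {E α : Type*} [NormedAddCommGroup E] [PseudoEMetricSpace α]
    (m : ℝ → E → α) (xbar : ℝ → E) (S T : ℝ) : Prop :=
  fEta m xbar S T < ⊤

/-- Hypothesis (BV1): `x̄` is continuous and, for some `δ' > 0`, `m(t,·)` is
continuously differentiable on the interior of `x̄(t) + δ'𝔹` for all `t ∈ [S,T]`. -/
def HypBV1 {n r : ℕ} (m : ℝ → En n → En r) (xbar : ℝ → En n) (S T δ' : ℝ) : Prop :=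
  ContinuousOn xbar (Set.Icc S T) ∧ 0 < δ' ∧
    ∀ t ∈ Set.Icc S T, ContDiffOn ℝ 1 (m t) (Metric.ball (xbar t) δ')

/-- Hypothesis (BV2): both `m(·,x)` and `∇ₓm(·,x)` have bounded variation along `x̄`. -/
def HypBV2 {n r : ℕ} (m : ℝ → En n → En r) (xbar : ℝ → En n) (S T : ℝ) : Prop :=
  FunHasBVAlong m xbar S T ∧
    FunHasBVAlong (fun t x => fderiv ℝ (m t) x) xbar S T

/-- The pairing `∫ g·dμʲ = Σᵢ ⟨g(tᵢ), m(tᵢ₊₁,ξᵢ) − m(tᵢ,ξᵢ)⟩` of a continuous function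
`g` with the discrete `ℝʳ`-valued measure `μʲ = Σᵢ [m(tᵢ₊₁,ξᵢ) − m(tᵢ,ξᵢ)] δ_{tᵢ}`. -/
noncomputable def discretePairing {n r : ℕ} (m : ℝ → En n → En r) {S T : ℝ}
    (P : TimePartition S T) (ξ : ℕ → En n) (g : ℝ → En r) : ℝ :=
  ∑ i ∈ Finset.range P.N, ∑ l : Fin r,
    g (P.pts i) l * (m (P.pts (i + 1)) (ξ i) l - m (P.pts i) (ξ i) l)

/-- The integral `∫ f dμ` of a real function against a signed Borel measure,
via the Jordan decomposition. -/
noncomputable def signedIntegral (μ : MeasureTheory.SignedMeasure ℝ) (f : ℝ → ℝ) : ℝ :=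
  (∫ t, f t ∂μ.toJordanDecomposition.posPart) -
    ∫ t, f t ∂μ.toJordanDecomposition.negPart

/-- The pairing `∫ g·dμ = Σ_l ∫ g_l dμ_l` of a continuous function with an
`ℝʳ`-valued Borel measure `μ` (given through its `r` signed components). -/
noncomputable def signedPairing {r : ℕ} (μ : Fin r → MeasureTheory.SignedMeasure ℝ)
    (g : ℝ → En r) : ℝ :=
  ∑ l : Fin r, signedIntegral (μ l) fun t => g t l

/-- `μ` (an `ℝʳ`-valued Borel measure on `[S,T]`, given through its signed components)
is the partial variation measure `B ↦ ∫_B d_t m(t,x̄(t))` of `m(·,x)` along `x̄`: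
it is supported on `[S,T]` and is the weak* limit of the discrete measures
`μʲ = Σᵢ [m(tʲᵢ₊₁,ξʲᵢ) − m(tʲᵢ,ξʲᵢ)] δ_{tʲᵢ}`, for every sequence of partitions of
`[S,T]` with diameters tending to `0` and points `ξʲᵢ = x̄(t)`, `t ∈ [tʲᵢ,tʲᵢ₊₁]`. -/
def IsPartialVariationMeasure {n r : ℕ} (m : ℝ → En n → En r) (xbar : ℝ → En n)
    (S T : ℝ) (μ : Fin r → MeasureTheory.SignedMeasure ℝ) : Prop :=
  (∀ l, (μ l).restrict (Set.Icc S T)ᶜ = 0) ∧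
  ∀ (P : ℕ → TimePartition S T) (ξ : ℕ → ℕ → En n),
    (∀ ε : ℝ, 0 < ε → ∃ J : ℕ, ∀ j ≥ J, (P j).diamLE ε) →
    (∀ j i, i < (P j).N →
      ∃ t ∈ Set.Icc ((P j).pts i) ((P j).pts (i + 1)), ξ j i = xbar t) →
    ∀ g : ℝ → En r, Continuous g →
      Tendsto (fun j => discretePairing m (P j) (ξ j) g) atTop (𝓝 (signedPairing μ g))


/-- The shifted (time-delayed, for `h > 0`) control `u^h`:
`u^h(t) = ū(S)` if `t−h < S`, `ū(t−h)` if `S ≤ t−h ≤ T`, and `ū(T)` if `t−h > T`. -/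
noncomputable def shiftedControl {k : ℕ} (ubar : ℝ → En k) (S T h t : ℝ) : En k :=
  if t - h < S then ubar S
  else if t - h ≤ T then ubar (t - h)
  else ubar T

namespace Stmt19Aux

def clamp (S T x : ℝ) : ℝ := min (max x S) T

lemma clamp_monotone (S T : ℝ) : Monotone (clamp S T) :=
  fun _ _ hab => min_le_min (max_le_max hab le_rfl) le_rfl

lemma clamp_mem {S T : ℝ} (hST : S ≤ T) (x : ℝ) : clamp S T x ∈ Set.Icc S T :=
  ⟨le_min (le_max_right _ _) hST, min_le_right _ _⟩

lemma clamp_of_mem {S T x : ℝ} (hx : x ∈ Set.Icc S T) : clamp S T x = x := by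
  simp only [clamp, max_eq_left hx.1, min_eq_left hx.2]

lemma clamp_continuous (S T : ℝ) : Continuous (clamp S T) :=
  (continuous_id.max continuous_const).min continuous_const

lemma measurable_of_bv {k : ℕ} {v : ℝ → En k} (hv : BoundedVariationOn v Set.univ) :
    Measurable v := by
  have h : ∀ i : Fin k, Measurable fun t => v t i := by
    intro i
    have hbv : BoundedVariationOn (fun t => v t i) Set.univ := by
      have := (EuclideanSpace.proj (𝕜 := ℝ) (ι := Fin k) i).lipschitz.comp_boundedVariationOn hv
      exact this
    obtain ⟨p, q, hp, hq, hpq⟩ :=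
      hbv.locallyBoundedVariationOn.exists_monotoneOn_sub_monotoneOn
    have heq : (fun t => v t i) = fun t => p t - q t := by rw [hpq]; rfl
    rw [heq]
    exact ((monotoneOn_univ.mp hp).measurable).sub ((monotoneOn_univ.mp hq).measurable)
  have hpi : Measurable fun t => (fun i => v t i : Fin k → ℝ) := measurable_pi_iff.mpr h
  exact ((EuclideanSpace.equiv (Fin k) ℝ).symm.continuous.measurable).comp hpi


lemma gronwall_int {a b : ℝ} (hab : a ≤ b) {ψ : ℝ → ℝ} (hψ : ContinuousOn ψ (Set.Icc a b))
    (hnn : ∀ t ∈ Set.Icc a b, 0 ≤ ψ t) {Kc C : ℝ} (hKc : 0 ≤ Kc) (hC : 0 ≤ C)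
    (hb : ∀ t ∈ Set.Icc a b, ψ t ≤ C + Kc * ∫ s in a..t, ψ s) :
    ∀ t ∈ Set.Icc a b, ψ t ≤ C * Real.exp (Kc * (b - a)) := by
  set χ : ℝ → ℝ := fun t => ψ (clamp a b t) with hχdef
  have hχc : Continuous χ := by
    rw [← continuousOn_univ]
    exact hψ.comp (clamp_continuous a b).continuousOn fun x _ => clamp_mem hab x
  have hχeq : ∀ t ∈ Set.Icc a b, χ t = ψ t := fun t ht => by rw [hχdef]; simp [clamp_of_mem ht]
  have hχnn : ∀ t, 0 ≤ χ t := fun t => hnn _ (clamp_mem hab t)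
  have hint : ∀ t ∈ Set.Icc a b, (∫ s in a..t, χ s) = ∫ s in a..t, ψ s := by
    intro t ht
    apply intervalIntegral.integral_congr
    intro s hs
    rw [Set.uIcc_of_le ht.1] at hs
    exact hχeq s ⟨hs.1, hs.2.trans ht.2⟩
  set Φ : ℝ → ℝ := fun t => ∫ s in a..t, χ s with hΦdef
  have hΦd : ∀ t, HasDerivAt Φ (χ t) t := fun t =>
    (hχc.integral_hasStrictDerivAt a t).hasDerivAt
  have hΦc : ContinuousOn Φ (Set.Icc a b) :=
    fun t _ => (hΦd t).continuousAt.continuousWithinAt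
  have hΦnn : ∀ t ∈ Set.Icc a b, 0 ≤ Φ t := fun t ht =>
    intervalIntegral.integral_nonneg ht.1 fun s _ => hχnn s
  have hgb := norm_le_gronwallBound_of_norm_deriv_right_le (f := Φ) (f' := χ) (δ := 0)
    (K := Kc) (ε := C) (a := a) (b := b) hΦc
    (fun x _ => (hΦd x).hasDerivWithinAt)
    (by simp [hΦdef]) ?_
  · intro t ht
    have h1 : Φ t ≤ gronwallBound 0 Kc C (t - a) := by
      have := hgb t ht
      rwa [Real.norm_eq_abs, abs_of_nonneg (hΦnn t ht)] at this
    have h2 : ψ t ≤ C + Kc * Φ t := by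
      show ψ t ≤ C + Kc * ∫ s in a..t, χ s
      rw [hint t ht]; exact hb t ht
    have hexp : Real.exp (Kc * (t - a)) ≤ Real.exp (Kc * (b - a)) :=
      Real.exp_le_exp.mpr (by nlinarith [ht.2])
    rcases eq_or_lt_of_le hKc with hK0 | hKpos
    · have : ψ t ≤ C := by rw [← hK0] at h2; simpa using h2
      calc ψ t ≤ C := this
        _ ≤ C * Real.exp (Kc * (b - a)) := by
            nlinarith [Real.one_le_exp (by nlinarith : (0:ℝ) ≤ Kc * (b - a))]
    · have hgb' : gronwallBound 0 Kc C (t - a) =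
          C / Kc * (Real.exp (Kc * (t - a)) - 1) := by
        rw [gronwallBound_of_K_ne_0 (ne_of_gt hKpos)]; ring
      have : ψ t ≤ C * Real.exp (Kc * (t - a)) := by
        rw [hgb'] at h1
        have h4 := mul_le_mul_of_nonneg_left h1 hKc
        have h5 : Kc * (C / Kc * (Real.exp (Kc * (t - a)) - 1)) =
            C * (Real.exp (Kc * (t - a)) - 1) := by
          field_simp
        rw [h5] at h4
        linarith
      exact this.trans (by nlinarith [Real.exp_pos (Kc * (t - a))])
  · intro x hx
    have hx' : x ∈ Set.Icc a b := ⟨hx.1, hx.2.le⟩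
    have h2 : ψ x ≤ C + Kc * Φ x := by
      show ψ x ≤ C + Kc * ∫ s in a..x, χ s
      rw [hint x hx']; exact hb x hx'
    rw [Real.norm_eq_abs, abs_of_nonneg (hχnn x), Real.norm_eq_abs,
      abs_of_nonneg (hΦnn x hx')]
    rw [hχeq x hx']
    linarith

lemma bootstrap {n m : ℕ} {f : En n → En m → En n} {Ω : Set (En m)} {x₀ : En n}
    {S T : ℝ} (hST : S ≤ T) (hfc : Continuous fun p : En n × En m => f p.1 p.2)
    {c : ℝ} (hc : 0 < c) (hgrow : ∀ x : En n, ∀ u ∈ Ω, ‖f x u‖ ≤ c * (1 + ‖x‖))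
    {w : ℝ → En m} (hw : Measurable w) (hwΩ : ∀ s, w s ∈ Ω)
    {y : ℝ → En n} (hy : ∀ t ∈ Set.Icc S T, y t = x₀ + ∫ s in S..t, f (y s) (w s)) :
    IntegrableOn (fun s => f (y s) (w s)) (Set.Icc S T) volume ∧
      ContinuousOn y (Set.Icc S T) ∧
      ∀ t ∈ Set.Icc S T, ‖y t‖ ≤ (‖x₀‖ + c * (T - S)) * Real.exp (c * (T - S)) := by
  set g : ℝ → En n := fun s => f (y s) (w s) with hg
  set C : ℝ := ‖x₀‖ + c * (T - S) with hCdef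
  set M : ℝ := C * Real.exp (c * (T - S)) with hMdef
  have hC0 : 0 ≤ C := by
    have : 0 ≤ c * (T - S) := mul_nonneg hc.le (by linarith)
    positivity
  have claimA : ∀ t ∈ Set.Icc S T, IntegrableOn g (Set.Icc S t) volume →
      ContinuousOn y (Set.Icc S t) ∧ ∀ s ∈ Set.Icc S t, ‖y s‖ ≤ M := by
    intro t ht hint
    have hceq : Set.EqOn y (fun x => x₀ + ∫ u in Set.Ioc S x, g u) (Set.Icc S t) := by
      intro x hx
      have hx' : x ∈ Set.Icc S T := ⟨hx.1, hx.2.trans ht.2⟩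
      rw [hy x hx', intervalIntegral.integral_of_le hx.1]
    have hycont : ContinuousOn y (Set.Icc S t) :=
      (continuousOn_const.add (intervalIntegral.continuousOn_primitive hint)).congr hceq
    have hbnd : ∀ s ∈ Set.Icc S t, ‖y s‖ ≤ C + c * ∫ u in S..s, ‖y u‖ := by
      intro s hs
      have hs' : s ∈ Set.Icc S T := ⟨hs.1, hs.2.trans ht.2⟩
      have hIg : IntervalIntegrable (fun u => ‖g u‖) volume S s := by
        apply MeasureTheory.IntegrableOn.intervalIntegrable
        rw [Set.uIcc_of_le hs.1]
        exact (hint.mono_set (Set.Icc_subset_Icc le_rfl hs.2)).norm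
      have h1 : ‖∫ u in S..s, g u‖ ≤ ∫ u in S..s, ‖g u‖ :=
        intervalIntegral.norm_integral_le_integral_norm hs.1
      have hIy : IntervalIntegrable (fun u => c * ‖y u‖) volume S s := by
        apply ContinuousOn.intervalIntegrable
        rw [Set.uIcc_of_le hs.1]
        exact continuousOn_const.mul ((hycont.mono (Set.Icc_subset_Icc le_rfl hs.2)).norm)
      have h2 : (∫ u in S..s, ‖g u‖) ≤ ∫ u in S..s, (c + c * ‖y u‖) := by
        apply intervalIntegral.integral_mono_on hs.1 hIg
          (intervalIntegrable_const.add hIy)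
        intro u _
        calc ‖g u‖ ≤ c * (1 + ‖y u‖) := hgrow (y u) (w u) (hwΩ u)
          _ = c + c * ‖y u‖ := by ring
      have h3 : (∫ u in S..s, (c + c * ‖y u‖)) =
          (s - S) * c + c * ∫ u in S..s, ‖y u‖ := by
        rw [intervalIntegral.integral_add intervalIntegrable_const hIy,
          intervalIntegral.integral_const, intervalIntegral.integral_const_mul,
          smul_eq_mul]
      have h4 : ‖y s‖ ≤ ‖x₀‖ + ∫ u in S..s, ‖g u‖ := by
        rw [hy s hs']
        exact (norm_add_le _ _).trans (by linarith)
      have h5 : (s - S) * c ≤ (T - S) * c :=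
        mul_le_mul_of_nonneg_right (by linarith [hs'.2]) hc.le
      rw [hCdef]
      linarith
    have hM : ∀ s ∈ Set.Icc S t, ‖y s‖ ≤ M := by
      have := gronwall_int ht.1 hycont.norm (fun s _ => norm_nonneg _) hc.le hC0 hbnd
      intro s hs
      refine (this s hs).trans ?_
      rw [hMdef]
      have : Real.exp (c * (t - S)) ≤ Real.exp (c * (T - S)) :=
        Real.exp_le_exp.mpr (by nlinarith [ht.2, hc.le])
      nlinarith
    exact ⟨hycont, hM⟩
  have hSmem : IntegrableOn g (Set.Icc S S) volume := by
    rw [Set.Icc_self, IntegrableOn, Measure.restrict_eq_zero.mpr (by simp)]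
    exact integrable_zero_measure
  set B : Set ℝ := {t ∈ Set.Icc S T | IntegrableOn g (Set.Icc S t) volume} with hB
  have hSB : S ∈ B := ⟨⟨le_rfl, hST⟩, hSmem⟩
  have hBne : B.Nonempty := ⟨S, hSB⟩
  have hBbdd : BddAbove B := ⟨T, fun x hx => hx.1.2⟩
  set τ := sSup B with hτ
  have hτmem : τ ∈ Set.Icc S T := ⟨le_csSup hBbdd hSB, csSup_le hBne fun x hx => hx.1.2⟩
  have hdc : ∀ t ∈ B, ∀ t', S ≤ t' → t' ≤ t → t' ∈ B := by
    intro t htB t' h1 h2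
    exact ⟨⟨h1, h2.trans htB.1.2⟩, htB.2.mono_set (Set.Icc_subset_Icc le_rfl h2)⟩
  have hltB : ∀ t, S ≤ t → t < τ → t ∈ B := by
    intro t h1 h2
    obtain ⟨b', hb'B, hb'⟩ := exists_lt_of_lt_csSup hBne h2
    exact hdc b' hb'B t h1 hb'.le
  have hτB : τ ∈ B := by
    rcases eq_or_lt_of_le hτmem.1 with he | hlt'
    · rw [← he]; exact hSB
    · refine ⟨hτmem, ?_⟩
      rw [integrableOn_Icc_iff_integrableOn_Ioc, integrableOn_Ioc_iff_integrableOn_Ioo]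
      have hyc : ∀ s ∈ Set.Ico S τ, ContinuousWithinAt y (Set.Ico S τ) s ∧ ‖y s‖ ≤ M := by
        intro s hs
        set t' := (s + τ) / 2 with ht'
        have h1 : s < t' := by rw [ht']; linarith [hs.2]
        have h2 : t' < τ := by rw [ht']; linarith [hs.2]
        have ht'B : t' ∈ B := hltB t' (hs.1.trans h1.le) h2
        obtain ⟨hcont, hbd⟩ := claimA t' ht'B.1 ht'B.2
        refine ⟨?_, hbd s ⟨hs.1, h1.le⟩⟩
        have hw1 : ContinuousWithinAt y (Set.Icc S t') s := hcont s ⟨hs.1, h1.le⟩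
        apply hw1.mono_of_mem_nhdsWithin
        rw [mem_nhdsWithin]
        exact ⟨Set.Iio t', isOpen_Iio, h1, fun x hx => ⟨hx.2.1, hx.1.le⟩⟩
      have hyc' : ContinuousOn y (Set.Ioo S τ) := fun s hs =>
        ((hyc s ⟨hs.1.le, hs.2⟩).1).mono Set.Ioo_subset_Ico_self
      have hmeas : AEStronglyMeasurable g (volume.restrict (Set.Ioo S τ)) := by
        have hy' : AEMeasurable y (volume.restrict (Set.Ioo S τ)) :=
          hyc'.aemeasurable measurableSet_Ioo
        exact (hfc.measurable.comp_aemeasurable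
          (hy'.prodMk hw.aemeasurable)).aestronglyMeasurable
      refine ⟨hmeas, HasFiniteIntegral.restrict_of_bounded (C := c * (1 + M))
        measure_Ioo_lt_top ?_⟩
      rw [ae_restrict_iff' measurableSet_Ioo]
      refine Eventually.of_forall fun s hs => ?_
      have hb1 : ‖y s‖ ≤ M := (hyc s ⟨hs.1.le, hs.2⟩).2
      calc ‖g s‖ ≤ c * (1 + ‖y s‖) := hgrow (y s) (w s) (hwΩ s)
        _ ≤ c * (1 + M) := by nlinarith
  have hmain : IntegrableOn g (Set.Icc S T) volume := by
    rcases eq_or_lt_of_le hτmem.2 with he | hltT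
    · rw [he] at hτB; exact hτB.2
    · have hyconst : ∀ t, τ < t → t ≤ T → y t = x₀ := by
        intro t h1 h2
        have hSt : S ≤ t := hτmem.1.trans h1.le
        have hni : ¬ IntegrableOn g (Set.Ioc S t) volume := by
          intro hcon
          have htB : t ∈ B := ⟨⟨hSt, h2⟩, (integrableOn_Icc_iff_integrableOn_Ioc (f := g)).mpr hcon⟩
          exact absurd (le_csSup hBbdd htB) (not_le.mpr h1)
        rw [hy t ⟨hSt, h2⟩, intervalIntegral.integral_of_le hSt,
          MeasureTheory.integral_undef hni, add_zero]
      have heq : Set.EqOn (fun s => f x₀ (w s)) g (Set.Ioc τ T) := by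
        intro s hs
        simp only [hg]
        rw [hyconst s hs.1 hs.2]
      have hint2 : IntegrableOn (fun s => f x₀ (w s)) (Set.Ioc τ T) volume := by
        refine ⟨((hfc.measurable.comp
          (measurable_const.prodMk hw))).aestronglyMeasurable.restrict,
          HasFiniteIntegral.restrict_of_bounded (C := c * (1 + ‖x₀‖))
            measure_Ioc_lt_top ?_⟩
        exact Eventually.of_forall fun s => hgrow x₀ (w s) (hwΩ s)
      have hIoc : IntegrableOn g (Set.Ioc τ T) volume :=
        hint2.congr_fun heq measurableSet_Ioc
      have hunion : IntegrableOn g (Set.Icc S τ ∪ Set.Ioc τ T) volume := hτB.2.union hIoc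
      have hsub : Set.Icc S T ⊆ Set.Icc S τ ∪ Set.Ioc τ T := by
        intro x hx
        by_cases hxτ : x ≤ τ
        · exact Or.inl ⟨hx.1, hxτ⟩
        · exact Or.inr ⟨not_le.mp hxτ, hx.2⟩
      exact hunion.mono_set hsub
  obtain ⟨hcont, hbd⟩ := claimA T ⟨hST, le_rfl⟩ hmain
  exact ⟨hmain, hcont, hbd⟩

end Stmt19Aux

/-- For the control system `(S)` under (S1)–(S3) and (BV):
(i) for every `h ≥ 0`,
`∫_{[S,T]} |f(x̄(t),u^h(t)) − f(x̄(t),ū(t))| dt ≤ 2 k₁ η_ū(T) h`, where `η_ū(T)` is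
the total variation of `ū` on `[S,T]` and `x̄ = x⁰`; and (ii) there is a constant
`K₁`, independent of `h`, with `‖x^h − x̄‖_{L^∞} ≤ K₁ h` for all sufficiently small
`h ≥ 0`. -/
theorem statement19 {n m : ℕ} (f : En n → En m → En n) (g : En n → ℝ)
    (Ω : Set (En m)) (x₀ : En n) (ubar : ℝ → En m) (S T : ℝ) (hST : S < T)
    -- the state trajectories `x^h` (with `x̄ = x⁰`)
    (xh : ℝ → ℝ → En n)
    (hxh : ∀ h : ℝ, ∀ t ∈ Set.Icc S T,
      xh h t = x₀ + ∫ s in S..t, f (xh h s) (shiftedControl ubar S T h s))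
    -- (S1)
    (hg : ContDiff ℝ 1 g)
    -- (S2)
    (hfc : Continuous fun p : En n × En m => f p.1 p.2)
    (hfC1 : ∀ u ∈ Ω, ContDiff ℝ 1 fun x => f x u)
    (c : ℝ) (hc : 0 < c) (hgrow : ∀ x : En n, ∀ u ∈ Ω, ‖f x u‖ ≤ c * (1 + ‖x‖))
    (K : ℝ) (hK : ∀ x : En n, ∀ u ∈ Ω, ‖fderiv ℝ (fun y => f y u) x‖ ≤ K)
    (δ : ℝ) (hδ : 0 < δ)
    (θ : ℝ → ℝ) (hθ0 : ∀ s, 0 ≤ θ s) (hθlim : Tendsto θ (𝓝[>] (0 : ℝ)) (𝓝 0))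
    (hTaylor : ∀ t ∈ Set.Icc S T, ∀ x ∈ Metric.closedBall (xh 0 t) δ,
      ∀ x' ∈ Metric.closedBall (xh 0 t) δ, ∀ u ∈ Ω,
        ‖f x u - f x' u - fderiv ℝ (fun y => f y u) x' (x - x')‖ ≤
          θ ‖x - x'‖ * ‖x - x'‖)
    -- (S3)
    (k₁ : ℝ) (hk₁ : 0 < k₁)
    (hLip : ∀ t ∈ Set.Icc S T, ∀ x ∈ Metric.closedBall (xh 0 t) δ, ∀ u ∈ Ω, ∀ u' ∈ Ω,
      ‖f x u - f x u'‖ + ‖fderiv ℝ (fun y => f y u) x - fderiv ℝ (fun y => f y u') x‖ ≤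
        k₁ * ‖u - u'‖)
    -- (BV) and the control constraint
    (hBV : BoundedVariationOn ubar (Set.Icc S T))
    (hΩ : ∀ t ∈ Set.Icc S T, ubar t ∈ Ω) :
    (∀ h : ℝ, 0 ≤ h →
      (∫ t in Set.Icc S T,
          ‖f (xh 0 t) (shiftedControl ubar S T h t) - f (xh 0 t) (ubar t)‖) ≤
        2 * k₁ * (eVariationOn ubar (Set.Icc S T)).toReal * h) ∧
    ∃ K₁ : ℝ, ∃ ε > (0 : ℝ), ∀ h : ℝ, 0 ≤ h → h ≤ ε →
      ∀ t ∈ Set.Icc S T, ‖xh h t - xh 0 t‖ ≤ K₁ * h := by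

  classical
  have hST' : S ≤ T := hST.le
  set v : ℝ → En m := fun x => ubar (Stmt19Aux.clamp S T x) with hvdef
  have hveq : ∀ h t : ℝ, shiftedControl ubar S T h t = v (t - h) := by
    intro h t
    simp only [hvdef, shiftedControl, Stmt19Aux.clamp]
    rcases lt_or_ge (t - h) S with h1 | h1
    · rw [if_pos h1, max_eq_right h1.le, min_eq_left hST']
    · rw [if_neg (not_lt.mpr h1), max_eq_left h1]
      rcases le_or_gt (t - h) T with h2 | h2
      · rw [if_pos h2, min_eq_left h2]
      · rw [if_neg (not_le.mpr h2), min_eq_right h2.le]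
  have hvbv : BoundedVariationOn v Set.univ := by
    have hmono := (Stmt19Aux.clamp_monotone S T).monotoneOn Set.univ
    have hcomp : eVariationOn v Set.univ =
        eVariationOn ubar (Stmt19Aux.clamp S T '' Set.univ) :=
      eVariationOn.comp_eq_of_monotoneOn ubar _ hmono
    have himg : Stmt19Aux.clamp S T '' Set.univ = Set.Icc S T := by
      apply Set.Subset.antisymm
      · rintro _ ⟨x, -, rfl⟩; exact Stmt19Aux.clamp_mem hST' x
      · intro x hx; exact ⟨x, Set.mem_univ x, Stmt19Aux.clamp_of_mem hx⟩
    rw [BoundedVariationOn, hcomp, himg]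
    exact hBV
  have hvmeas : Measurable v := Stmt19Aux.measurable_of_bv hvbv
  have hvΩ : ∀ x, v x ∈ Ω := fun x => hΩ _ (Stmt19Aux.clamp_mem hST' x)
  have hwmeas : ∀ h : ℝ, Measurable (shiftedControl ubar S T h) := by
    intro h
    have : shiftedControl ubar S T h = fun t => v (t - h) := funext (hveq h)
    rw [this]
    exact hvmeas.comp (measurable_id.sub measurable_const)
  have hwΩ : ∀ (h s : ℝ), shiftedControl ubar S T h s ∈ Ω := fun h s => by
    rw [hveq]; exact hvΩ _
  set V : ℝ → ℝ := fun x => (eVariationOn ubar (Set.Icc S (min x T))).toReal with hVdef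
  have hfin : ∀ s : Set ℝ, s ⊆ Set.Icc S T → eVariationOn ubar s ≠ ⊤ := fun s hs =>
    ne_top_of_le_ne_top hBV (eVariationOn.mono ubar hs)
  have hsub : ∀ x : ℝ, Set.Icc S (min x T) ⊆ Set.Icc S T :=
    fun x => Set.Icc_subset_Icc le_rfl (min_le_right _ _)
  have hVmono : Monotone V := by
    intro a b hab
    exact ENNReal.toReal_mono (hfin _ (hsub b))
      (eVariationOn.mono ubar (Set.Icc_subset_Icc le_rfl (min_le_min hab le_rfl)))
  have hVnn : ∀ x, 0 ≤ V x := fun x => ENNReal.toReal_nonneg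
  have hVzero : ∀ x, x ≤ S → V x = 0 := by
    intro x hx
    have hsing : (Set.Icc S (min x T)).Subsingleton := by
      intro a ha b hb
      have h1 : min x T ≤ S := le_trans (min_le_left _ _) hx
      have ha' : a = S := le_antisymm (ha.2.trans h1) ha.1
      have hb' : b = S := le_antisymm (hb.2.trans h1) hb.1
      rw [ha', hb']
    simp only [hVdef]
    rw [eVariationOn.subsingleton ubar hsing, ENNReal.toReal_zero]
  have hVT : V T = (eVariationOn ubar (Set.Icc S T)).toReal := by
    simp only [hVdef, min_self]
  have hVleT : ∀ x, V x ≤ V T := by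
    intro x
    rw [hVT]
    exact ENNReal.toReal_mono hBV (eVariationOn.mono ubar (hsub x))
  have hkey : ∀ h : ℝ, 0 ≤ h → ∀ t ∈ Set.Icc S T,
      ‖v (t - h) - ubar t‖ ≤ V t - V (t - h) := by
    intro h hh t ht
    have hth : t - h ≤ T := by linarith [ht.2]
    have htT : min t T = t := min_eq_left ht.2
    have hVt : V t = (eVariationOn ubar (Set.Icc S t)).toReal := by
      simp only [hVdef, htT]
    have f3 : eVariationOn ubar (Set.Icc S t) ≠ ⊤ :=
      hfin _ (Set.Icc_subset_Icc le_rfl ht.2)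
    rcases le_or_gt S (t - h) with h1 | h1
    · have hclamp : Stmt19Aux.clamp S T (t - h) = t - h :=
        Stmt19Aux.clamp_of_mem ⟨h1, hth⟩
      have hsplit := eVariationOn.Icc_add_Icc (s := Set.univ) ubar h1
        (by linarith : t - h ≤ t) (Set.mem_univ (t - h))
      simp only [Set.univ_inter] at hsplit
      have f1 : eVariationOn ubar (Set.Icc S (t - h)) ≠ ⊤ :=
        hfin _ (Set.Icc_subset_Icc le_rfl hth)
      have f2 : eVariationOn ubar (Set.Icc (t - h) t) ≠ ⊤ :=
        hfin _ (Set.Icc_subset_Icc h1 ht.2)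
      have hed : edist (ubar (t - h)) (ubar t) ≤ eVariationOn ubar (Set.Icc (t - h) t) :=
        eVariationOn.edist_le ubar (Set.left_mem_Icc.mpr (by linarith))
          (Set.right_mem_Icc.mpr (by linarith))
      have hdist : ‖v (t - h) - ubar t‖ ≤ (eVariationOn ubar (Set.Icc (t - h) t)).toReal := by
        simp only [hvdef]
        rw [hclamp, ← dist_eq_norm, dist_edist]
        exact ENNReal.toReal_mono f2 hed
      have harith : (eVariationOn ubar (Set.Icc S (t - h))).toReal +
          (eVariationOn ubar (Set.Icc (t - h) t)).toReal =
          (eVariationOn ubar (Set.Icc S t)).toReal := by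
        rw [← ENNReal.toReal_add f1 f2, hsplit]
      have hVth : V (t - h) = (eVariationOn ubar (Set.Icc S (t - h))).toReal := by
        simp only [hVdef, min_eq_left hth]
      rw [hVt, hVth]
      linarith
    · have hclamp : Stmt19Aux.clamp S T (t - h) = S := by
        simp [Stmt19Aux.clamp, max_eq_right h1.le, min_eq_left hST']
      have hVth : V (t - h) = 0 := hVzero _ h1.le
      have hed : edist (ubar S) (ubar t) ≤ eVariationOn ubar (Set.Icc S t) :=
        eVariationOn.edist_le ubar (Set.left_mem_Icc.mpr ht.1)
          (Set.right_mem_Icc.mpr ht.1)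
      simp only [hvdef]
      rw [hclamp, ← dist_eq_norm, dist_edist, hVth, hVt, sub_zero]
      exact ENNReal.toReal_mono f3 hed
  have hpart1 : ∀ h : ℝ, 0 ≤ h →
      (∫ t in Set.Icc S T,
          ‖f (xh 0 t) (shiftedControl ubar S T h t) - f (xh 0 t) (ubar t)‖) ≤
        2 * k₁ * (eVariationOn ubar (Set.Icc S T)).toReal * h := by
    intro h hh
    set F := fun t => ‖f (xh 0 t) (shiftedControl ubar S T h t) - f (xh 0 t) (ubar t)‖
      with hF
    have hRHS0 : 0 ≤ 2 * k₁ * (eVariationOn ubar (Set.Icc S T)).toReal * h := by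
      have h0 : (0:ℝ) ≤ (eVariationOn ubar (Set.Icc S T)).toReal := ENNReal.toReal_nonneg
      exact mul_nonneg (mul_nonneg (by linarith) h0) hh
    by_cases hFi : IntegrableOn F (Set.Icc S T) volume
    · have hFG : ∀ t ∈ Set.Icc S T, F t ≤ k₁ * (V t - V (t - h)) := by
        intro t ht
        have hl := hLip t ht (xh 0 t) (mem_closedBall_self hδ.le)
          (shiftedControl ubar S T h t) (hwΩ h t) (ubar t) (hΩ t ht)
        have h1 : F t ≤ k₁ * ‖shiftedControl ubar S T h t - ubar t‖ :=
          le_trans (le_add_of_nonneg_right (norm_nonneg _)) hl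
        refine h1.trans (mul_le_mul_of_nonneg_left ?_ hk₁.le)
        rw [hveq h t]
        exact hkey h hh t ht
      have hVint : ∀ a b : ℝ, IntervalIntegrable V volume a b := fun a b =>
        hVmono.intervalIntegrable
      have hVhmono : Monotone fun u : ℝ => V (u - h) :=
        hVmono.comp fun x y hxy => by simpa using sub_le_sub_right hxy h
      have hVhint : ∀ a b : ℝ, IntervalIntegrable (fun u => V (u - h)) volume a b :=
        fun a b => hVhmono.intervalIntegrable
      have hGint : IntegrableOn (fun t => k₁ * (V t - V (t - h))) (Set.Icc S T) volume := by
        rw [integrableOn_Icc_iff_integrableOn_Ioc]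
        exact (((hVint S T).1.sub (hVhint S T).1).const_mul k₁)
      have step1 : (∫ t in Set.Icc S T, F t) ≤
          ∫ t in Set.Icc S T, k₁ * (V t - V (t - h)) :=
        setIntegral_mono_on hFi hGint measurableSet_Icc hFG
      have step2 : (∫ t in Set.Icc S T, k₁ * (V t - V (t - h))) =
          k₁ * ((∫ t in S..T, V t) - ∫ t in S..T, V (t - h)) := by
        rw [MeasureTheory.integral_Icc_eq_integral_Ioc, ← intervalIntegral.integral_of_le hST',
          intervalIntegral.integral_const_mul,
          intervalIntegral.integral_sub (hVint S T) (hVhint S T)]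
      have step3 : (∫ t in S..T, V t) - (∫ t in S..T, V (t - h)) ≤ h * V T := by
        have e1 : (∫ t in S..T, V (t - h)) = ∫ t in S - h..T - h, V t :=
          intervalIntegral.integral_comp_sub_right V h
        have a1 := intervalIntegral.integral_add_adjacent_intervals
          (hVint (S - h) S) (hVint S T)
        have a2 := intervalIntegral.integral_add_adjacent_intervals
          (hVint (S - h) (T - h)) (hVint (T - h) T)
        have b1 : 0 ≤ ∫ t in S - h..S, V t :=
          intervalIntegral.integral_nonneg (by linarith) fun u _ => hVnn u
        have b2 : (∫ t in T - h..T, V t) ≤ h * V T := by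
          have hmon := intervalIntegral.integral_mono_on (by linarith : T - h ≤ T)
            (hVint (T - h) T) intervalIntegrable_const fun x _ => hVleT x
          rwa [intervalIntegral.integral_const, smul_eq_mul,
            (by ring : T - (T - h) = h)] at hmon
        rw [e1]
        linarith
      have step4 : k₁ * ((∫ t in S..T, V t) - ∫ t in S..T, V (t - h)) ≤ k₁ * (h * V T) :=
        mul_le_mul_of_nonneg_left step3 hk₁.le
      have step5 : k₁ * (h * V T) ≤
          2 * k₁ * (eVariationOn ubar (Set.Icc S T)).toReal * h := by
        rw [← hVT]
        nlinarith [hVnn T, hk₁.le, hh, mul_nonneg (mul_nonneg hk₁.le hh) (hVnn T)]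
      calc (∫ t in Set.Icc S T, F t) ≤ ∫ t in Set.Icc S T, k₁ * (V t - V (t - h)) := step1
        _ = k₁ * ((∫ t in S..T, V t) - ∫ t in S..T, V (t - h)) := step2
        _ ≤ k₁ * (h * V T) := step4
        _ ≤ _ := step5
    · rw [MeasureTheory.integral_undef hFi]
      exact hRHS0
  refine ⟨hpart1, ?_⟩
  have hΩS : ubar S ∈ Ω := hΩ S ⟨le_rfl, hST'⟩
  have hK0 : 0 ≤ K := le_trans (norm_nonneg _) (hK 0 (ubar S) hΩS)
  have hLipx : ∀ u ∈ Ω, ∀ x x' : En n, ‖f x u - f x' u‖ ≤ K * ‖x - x'‖ := by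
    intro u hu x x'
    exact Convex.norm_image_sub_le_of_norm_fderiv_le
      (fun z _ => ((hfC1 u hu).differentiable one_ne_zero).differentiableAt)
      (fun z _ => hK z u hu) convex_univ (Set.mem_univ x') (Set.mem_univ x)
  set VT := (eVariationOn ubar (Set.Icc S T)).toReal with hVTdef
  have hVT0 : 0 ≤ VT := ENNReal.toReal_nonneg
  refine ⟨2 * k₁ * VT * Real.exp (K * (T - S)), 1, one_pos, ?_⟩
  intro h hh0 _ t ht
  obtain ⟨hgInt_h, hycont_h, hybd_h⟩ :=
    Stmt19Aux.bootstrap hST' hfc hc hgrow (hwmeas h) (hwΩ h) (hxh h)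
  obtain ⟨hgInt_0, hycont_0, hybd_0⟩ :=
    Stmt19Aux.bootstrap hST' hfc hc hgrow (hwmeas 0) (hwΩ 0) (hxh 0)
  set M : ℝ := (‖x₀‖ + c * (T - S)) * Real.exp (c * (T - S)) with hM
  have hmix : IntegrableOn (fun s => f (xh 0 s) (shiftedControl ubar S T h s))
      (Set.Icc S T) volume := by
    refine ⟨(hfc.measurable.comp_aemeasurable
      (((hycont_0.aemeasurable measurableSet_Icc)).prodMk
        (hwmeas h).aemeasurable)).aestronglyMeasurable,
      HasFiniteIntegral.restrict_of_bounded (C := c * (1 + M)) measure_Icc_lt_top ?_⟩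
    rw [ae_restrict_iff' measurableSet_Icc]
    refine Eventually.of_forall fun s hs => ?_
    calc ‖f (xh 0 s) (shiftedControl ubar S T h s)‖ ≤ c * (1 + ‖xh 0 s‖) :=
          hgrow _ _ (hwΩ h s)
      _ ≤ c * (1 + M) := by nlinarith [hybd_0 s hs, hc.le]
  set φ : ℝ → ℝ := fun s =>
    ‖f (xh 0 s) (shiftedControl ubar S T h s) - f (xh 0 s) (shiftedControl ubar S T 0 s)‖
    with hφ
  have hφint : IntegrableOn φ (Set.Icc S T) volume := (hmix.sub hgInt_0).norm
  have hφnn : ∀ s, 0 ≤ φ s := fun s => norm_nonneg _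
  have hφbound : (∫ s in Set.Icc S T, φ s) ≤ 2 * k₁ * VT * h := by
    have hEq : Set.EqOn φ (fun s =>
        ‖f (xh 0 s) (shiftedControl ubar S T h s) - f (xh 0 s) (ubar s)‖)
        (Set.Icc S T) := by
      intro s hs
      have hw0 : shiftedControl ubar S T 0 s = ubar s := by
        rw [hveq 0 s, sub_zero, hvdef]
        exact congrArg ubar (Stmt19Aux.clamp_of_mem hs)
      simp only [hφ, hw0]
    rw [setIntegral_congr_fun measurableSet_Icc hEq]
    exact hpart1 h hh0
  set ψ : ℝ → ℝ := fun s => ‖xh h s - xh 0 s‖ with hψ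
  have hψc : ContinuousOn ψ (Set.Icc S T) := (hycont_h.sub hycont_0).norm
  have hψb : ∀ s ∈ Set.Icc S T, ψ s ≤ 2 * k₁ * VT * h + K * ∫ u in S..s, ψ u := by
    intro s hs
    have hInth : IntervalIntegrable
        (fun u => f (xh h u) (shiftedControl ubar S T h u)) volume S s := by
      apply MeasureTheory.IntegrableOn.intervalIntegrable
      rw [Set.uIcc_of_le hs.1]
      exact hgInt_h.mono_set (Set.Icc_subset_Icc le_rfl hs.2)
    have hInt0 : IntervalIntegrable
        (fun u => f (xh 0 u) (shiftedControl ubar S T 0 u)) volume S s := by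
      apply MeasureTheory.IntegrableOn.intervalIntegrable
      rw [Set.uIcc_of_le hs.1]
      exact hgInt_0.mono_set (Set.Icc_subset_Icc le_rfl hs.2)
    have heq1 : xh h s - xh 0 s = ∫ u in S..s,
        (f (xh h u) (shiftedControl ubar S T h u)
          - f (xh 0 u) (shiftedControl ubar S T 0 u)) := by
      rw [hxh h s hs, hxh 0 s hs, intervalIntegral.integral_sub hInth hInt0]
      abel
    have h2 : ψ s ≤ ∫ u in S..s,
        ‖f (xh h u) (shiftedControl ubar S T h u)
          - f (xh 0 u) (shiftedControl ubar S T 0 u)‖ := by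
      simp only [hψ]
      rw [heq1]
      exact intervalIntegral.norm_integral_le_integral_norm hs.1
    have hIφ : IntervalIntegrable φ volume S s := by
      apply MeasureTheory.IntegrableOn.intervalIntegrable
      rw [Set.uIcc_of_le hs.1]
      exact hφint.mono_set (Set.Icc_subset_Icc le_rfl hs.2)
    have hIψ : IntervalIntegrable (fun u => K * ψ u) volume S s := by
      apply ContinuousOn.intervalIntegrable
      rw [Set.uIcc_of_le hs.1]
      exact continuousOn_const.mul (hψc.mono (Set.Icc_subset_Icc le_rfl hs.2))
    have h3 : (∫ u in S..s,
        ‖f (xh h u) (shiftedControl ubar S T h u)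
          - f (xh 0 u) (shiftedControl ubar S T 0 u)‖) ≤
        ∫ u in S..s, (K * ψ u + φ u) := by
      apply intervalIntegral.integral_mono_on hs.1 (hInth.sub hInt0).norm (hIψ.add hIφ)
      intro u _
      have tri : ‖f (xh h u) (shiftedControl ubar S T h u)
          - f (xh 0 u) (shiftedControl ubar S T 0 u)‖ ≤
          ‖f (xh h u) (shiftedControl ubar S T h u)
            - f (xh 0 u) (shiftedControl ubar S T h u)‖ +
          ‖f (xh 0 u) (shiftedControl ubar S T h u)
            - f (xh 0 u) (shiftedControl ubar S T 0 u)‖ := by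
        rw [show f (xh h u) (shiftedControl ubar S T h u)
            - f (xh 0 u) (shiftedControl ubar S T 0 u) =
            (f (xh h u) (shiftedControl ubar S T h u)
              - f (xh 0 u) (shiftedControl ubar S T h u)) +
            (f (xh 0 u) (shiftedControl ubar S T h u)
              - f (xh 0 u) (shiftedControl ubar S T 0 u)) by abel]
        exact norm_add_le _ _
      refine tri.trans ?_
      have hl := hLipx (shiftedControl ubar S T h u) (hwΩ h u) (xh h u) (xh 0 u)
      simp only [hψ, hφ]
      linarith
    have h4 : (∫ u in S..s, (K * ψ u + φ u)) =
        K * (∫ u in S..s, ψ u) + ∫ u in S..s, φ u := by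
      rw [intervalIntegral.integral_add hIψ hIφ, intervalIntegral.integral_const_mul]
    have h5 : (∫ u in S..s, φ u) ≤ ∫ u in Set.Icc S T, φ u := by
      rw [intervalIntegral.integral_of_le hs.1]
      apply setIntegral_mono_set hφint (Eventually.of_forall fun u => hφnn u)
      exact HasSubset.Subset.eventuallyLE
        ((Set.Ioc_subset_Icc_self).trans (Set.Icc_subset_Icc le_rfl hs.2))
    linarith
  have hgron := Stmt19Aux.gronwall_int hST' hψc (fun s _ => norm_nonneg _) hK0
    (mul_nonneg (mul_nonneg (by linarith) hVT0) hh0 : (0:ℝ) ≤ 2 * k₁ * VT * h) hψb t ht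
  calc ‖xh h t - xh 0 t‖ = ψ t := rfl
    _ ≤ 2 * k₁ * VT * h * Real.exp (K * (T - S)) := hgron
    _ = 2 * k₁ * VT * Real.exp (K * (T - S)) * h := by ring

end
end
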